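/- arXiv:1304.0684 — 3 statements merged into one kernel-verified Lean document; each statement's English description precedes it below -/
import Mathlib

section
/- For complex q with |q| < 1, the three Jacobi null theta functions satisfy θ₃(q)⁴ = θ₄(q)⁴ + θ₂(q)⁴, where θ₃(q) = ∑_{n∈ℤ} q^{n²}, θ₄(q) = ∑_{n∈ℤ} (-1)ⁿ q^{n²}, and θ₂(q) = ∑_{n∈ℤ} q^{(n+1/2)²}. -/
open Complex Function

namespace JacobiQuartic

/-- The basic theta-type term `q ^ (c * (n + d)^2)` with a complex power. -/
noncomputable def T (q : ℂ) (c d : ℝ) (n : ℤ) : ℂ := q ^ ((c * ((n : ℝ) + d) ^ 2 : ℝ) : ℂ)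

lemma norm_q_cpow {q : ℂ} (hq0 : q ≠ 0) (x : ℝ) :
    ‖q ^ (x : ℂ)‖ = ‖q‖ ^ x := by
  rw [norm_cpow_of_ne_zero hq0]
  simp

lemma summable_natAbs_geom {r : ℝ} (h0 : 0 ≤ r) (h1 : r < 1) :
    Summable fun n : ℤ => r ^ n.natAbs := by
  apply Summable.of_nat_of_neg <;> simpa using summable_geometric_of_lt_one h0 h1

lemma key_ineq (c d x : ℝ) (hc : 1 ≤ c) (hd0 : 0 ≤ d) (hd : d ≤ 1 / 2) :
    |x| - 1 ≤ c * (x + d) ^ 2 := by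
  have h2 : (x + d) ^ 2 ≤ c * (x + d) ^ 2 := le_mul_of_one_le_left (sq_nonneg _) hc
  rcases abs_cases x with ⟨h, hx⟩ | ⟨h, hx⟩
  · nlinarith [sq_nonneg (x - 1), mul_nonneg hd0 hx, sq_nonneg d]
  · nlinarith [sq_nonneg (x + 1), sq_nonneg d,
      mul_nonneg (by linarith : (0:ℝ) ≤ 1 - 2 * d) (by linarith : (0:ℝ) ≤ -x)]

lemma summable_norm_T {q : ℂ} (hq0 : q ≠ 0) (hq : ‖q‖ < 1)
    {c d : ℝ} (hc : 1 ≤ c) (hd0 : 0 ≤ d) (hd : d ≤ 1 / 2) :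
    Summable fun n : ℤ => ‖T q c d n‖ := by
  have h0 : 0 < ‖q‖ := norm_pos_iff.mpr hq0
  simp only [T, norm_q_cpow hq0]
  apply Summable.of_nonneg_of_le (fun n => Real.rpow_nonneg h0.le _) (fun n => ?_)
    ((summable_natAbs_geom h0.le hq).mul_left ‖q‖⁻¹)
  have habs : |(n : ℝ)| = (n.natAbs : ℝ) := by push_cast [Nat.cast_natAbs]; ring
  have key := key_ineq c d (n : ℝ) hc hd0 hd
  calc ‖q‖ ^ (c * ((n : ℝ) + d) ^ 2)
      ≤ ‖q‖ ^ ((n.natAbs : ℝ) - 1) :=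
        Real.rpow_le_rpow_of_exponent_ge h0 hq.le (by rw [← habs]; linarith)
    _ = ‖q‖⁻¹ * ‖q‖ ^ n.natAbs := by
        rw [Real.rpow_sub h0, Real.rpow_one, Real.rpow_natCast]; ring

lemma summable_T {q : ℂ} (hq0 : q ≠ 0) (hq : ‖q‖ < 1)
    {c d : ℝ} (hc : 1 ≤ c) (hd0 : 0 ≤ d) (hd : d ≤ 1 / 2) :
    Summable fun n : ℤ => T q c d n :=
  (summable_norm_T hq0 hq hc hd0 hd).of_norm

lemma T_mul {q : ℂ} (hq0 : q ≠ 0) (c d c' d' : ℝ) (m n : ℤ) :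
    T q c d m * T q c' d' n =
      q ^ (((c * ((m : ℝ) + d) ^ 2 + c' * ((n : ℝ) + d') ^ 2 : ℝ)) : ℂ) := by
  rw [T, T, Complex.ofReal_add, Complex.cpow_add _ _ hq0]

lemma natAbs_sq_cast (n : ℤ) : ((n.natAbs ^ 2 : ℕ) : ℂ) = ((n : ℂ)) ^ 2 := by
  push_cast
  norm_cast
  exact Int.natAbs_sq n |>.symm ▸ rfl

lemma exp_congr {q : ℂ} {x y : ℝ} (h : x = y) : q ^ ((x : ℝ) : ℂ) = q ^ ((y : ℝ) : ℂ) := by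
  rw [h]

/-- Doubling identity: `θ₃(q)² + θ₄(q)² = 2 θ₃(q²)²`. -/
lemma add_sq {q : ℂ} (hq0 : q ≠ 0) (hq : ‖q‖ < 1) :
    (∑' n : ℤ, T q 1 0 n) ^ 2 + (∑' n : ℤ, (-1 : ℂ) ^ n * T q 1 0 n) ^ 2 =
      2 * (∑' n : ℤ, T q 2 0 n) ^ 2 := by
  have hT10 : Summable fun n : ℤ => ‖T q 1 0 n‖ := summable_norm_T hq0 hq le_rfl le_rfl (by norm_num)
  have hT20 : Summable fun n : ℤ => ‖T q 2 0 n‖ :=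
    summable_norm_T hq0 hq (by norm_num) le_rfl (by norm_num)
  have hB : Summable fun n : ℤ => ‖(-1 : ℂ) ^ n * T q 1 0 n‖ := by
    simpa [norm_mul, norm_zpow] using hT10
  rw [sq, sq, tsum_mul_tsum_of_summable_norm hT10 hT10, tsum_mul_tsum_of_summable_norm hB hB,
    ← Summable.tsum_add (summable_mul_of_summable_norm hT10 hT10)
      (summable_mul_of_summable_norm hB hB)]
  have hpt : ∀ p : ℤ × ℤ,
      T q 1 0 p.1 * T q 1 0 p.2 + ((-1:ℂ) ^ p.1 * T q 1 0 p.1) * ((-1:ℂ) ^ p.2 * T q 1 0 p.2) =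
        (1 + (-1:ℂ) ^ (p.1 + p.2)) *
          q ^ (((1 * ((p.1 : ℝ) + 0) ^ 2 + 1 * ((p.2 : ℝ) + 0) ^ 2 : ℝ)) : ℂ) := by
    intro p
    rw [← T_mul hq0, zpow_add₀ (by norm_num : (-1:ℂ) ≠ 0)]
    ring
  rw [tsum_congr hpt]
  set g : ℤ × ℤ → ℂ := fun p =>
    (1 + (-1:ℂ) ^ (p.1 + p.2)) *
      q ^ (((1 * ((p.1 : ℝ) + 0) ^ 2 + 1 * ((p.2 : ℝ) + 0) ^ 2 : ℝ)) : ℂ) with hg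
  have hinj : Injective fun p : ℤ × ℤ => (p.1 + p.2, p.1 - p.2) := by
    intro a b h
    simp only [Prod.mk.injEq, Prod.ext_iff] at h ⊢
    omega
  have hsupp : support g ⊆ Set.range fun p : ℤ × ℤ => (p.1 + p.2, p.1 - p.2) := by
    intro p hp
    rcases Int.even_or_odd (p.1 + p.2) with he | ho
    · obtain ⟨k, hk⟩ := he
      exact ⟨(k, p.1 - k), by simp [Prod.ext_iff]; omega⟩
    · exact absurd (by simp [hg, ho.neg_one_zpow]) hp
  rw [← hinj.tsum_eq hsupp]
  have hpt2 : ∀ p : ℤ × ℤ, g ((p.1 + p.2, p.1 - p.2)) = 2 * (T q 2 0 p.1 * T q 2 0 p.2) := by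
    intro p
    have he : Even ((p.1 + p.2) + (p.1 - p.2)) := ⟨p.1, by ring⟩
    rw [hg]
    simp only
    rw [he.neg_one_zpow, T_mul hq0,
      exp_congr (q := q) (by push_cast; ring :
        (1 * (((p.1 + p.2 : ℤ) : ℝ) + 0) ^ 2 + 1 * (((p.1 - p.2 : ℤ) : ℝ) + 0) ^ 2 : ℝ) =
          (2 * ((p.1 : ℝ) + 0) ^ 2 + 2 * ((p.2 : ℝ) + 0) ^ 2 : ℝ))]
    rw [← T_mul hq0]
    ring
  rw [tsum_congr hpt2, tsum_mul_left, ← tsum_mul_tsum_of_summable_norm hT20 hT20, sq]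

/-- Doubling identity: `θ₃(q)² − θ₄(q)² = 2 θ₂(q²)²`. -/
lemma sub_sq {q : ℂ} (hq0 : q ≠ 0) (hq : ‖q‖ < 1) :
    (∑' n : ℤ, T q 1 0 n) ^ 2 - (∑' n : ℤ, (-1 : ℂ) ^ n * T q 1 0 n) ^ 2 =
      2 * (∑' n : ℤ, T q 2 (1/2) n) ^ 2 := by
  have hT10 : Summable fun n : ℤ => ‖T q 1 0 n‖ := summable_norm_T hq0 hq le_rfl le_rfl (by norm_num)
  have hT2h : Summable fun n : ℤ => ‖T q 2 (1/2) n‖ :=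
    summable_norm_T hq0 hq (by norm_num) (by norm_num) (by norm_num)
  have hB : Summable fun n : ℤ => ‖(-1 : ℂ) ^ n * T q 1 0 n‖ := by
    simpa [norm_mul, norm_zpow] using hT10
  rw [sq, sq, tsum_mul_tsum_of_summable_norm hT10 hT10, tsum_mul_tsum_of_summable_norm hB hB,
    ← (summable_mul_of_summable_norm hT10 hT10).tsum_sub
      (summable_mul_of_summable_norm hB hB)]
  have hpt : ∀ p : ℤ × ℤ,
      T q 1 0 p.1 * T q 1 0 p.2 - ((-1:ℂ) ^ p.1 * T q 1 0 p.1) * ((-1:ℂ) ^ p.2 * T q 1 0 p.2) =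
        (1 - (-1:ℂ) ^ (p.1 + p.2)) *
          q ^ (((1 * ((p.1 : ℝ) + 0) ^ 2 + 1 * ((p.2 : ℝ) + 0) ^ 2 : ℝ)) : ℂ) := by
    intro p
    rw [← T_mul hq0, zpow_add₀ (by norm_num : (-1:ℂ) ≠ 0)]
    ring
  rw [tsum_congr hpt]
  set g : ℤ × ℤ → ℂ := fun p =>
    (1 - (-1:ℂ) ^ (p.1 + p.2)) *
      q ^ (((1 * ((p.1 : ℝ) + 0) ^ 2 + 1 * ((p.2 : ℝ) + 0) ^ 2 : ℝ)) : ℂ) with hg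
  have hinj : Injective fun p : ℤ × ℤ => (p.1 + p.2 + 1, p.1 - p.2) := by
    intro a b h
    simp only [Prod.mk.injEq, Prod.ext_iff] at h ⊢
    omega
  have hsupp : support g ⊆ Set.range fun p : ℤ × ℤ => (p.1 + p.2 + 1, p.1 - p.2) := by
    intro p hp
    rcases Int.even_or_odd (p.1 + p.2) with he | ho
    · exact absurd (by simp [hg, he.neg_one_zpow]) hp
    · obtain ⟨k, hk⟩ := ho
      exact ⟨(k, p.1 - k - 1), by simp [Prod.ext_iff]; omega⟩
  rw [← hinj.tsum_eq hsupp]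
  have hpt2 : ∀ p : ℤ × ℤ,
      g ((p.1 + p.2 + 1, p.1 - p.2)) = 2 * (T q 2 (1/2) p.1 * T q 2 (1/2) p.2) := by
    intro p
    have ho : Odd ((p.1 + p.2 + 1) + (p.1 - p.2)) := ⟨p.1, by ring⟩
    rw [hg]
    simp only
    rw [ho.neg_one_zpow, T_mul hq0,
      exp_congr (q := q) (by push_cast; ring :
        (1 * (((p.1 + p.2 + 1 : ℤ) : ℝ) + 0) ^ 2 + 1 * (((p.1 - p.2 : ℤ) : ℝ) + 0) ^ 2 : ℝ) =
          (2 * ((p.1 : ℝ) + 1/2) ^ 2 + 2 * ((p.2 : ℝ) + 1/2) ^ 2 : ℝ))]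
    rw [← T_mul hq0]
    ring
  rw [tsum_congr hpt2, tsum_mul_left, ← tsum_mul_tsum_of_summable_norm hT2h hT2h, sq]

/-- Doubling identity: `θ₂(q)² = 2 θ₂(q²) θ₃(q²)`. -/
lemma two_sq {q : ℂ} (hq0 : q ≠ 0) (hq : ‖q‖ < 1) :
    (∑' n : ℤ, T q 1 (1/2) n) ^ 2 =
      2 * ((∑' n : ℤ, T q 2 0 n) * (∑' n : ℤ, T q 2 (1/2) n)) := by
  have hT1h : Summable fun n : ℤ => ‖T q 1 (1/2) n‖ :=
    summable_norm_T hq0 hq le_rfl (by norm_num) (by norm_num)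
  have hT20 : Summable fun n : ℤ => ‖T q 2 0 n‖ :=
    summable_norm_T hq0 hq (by norm_num) le_rfl (by norm_num)
  have hT2h : Summable fun n : ℤ => ‖T q 2 (1/2) n‖ :=
    summable_norm_T hq0 hq (by norm_num) (by norm_num) (by norm_num)
  rw [sq, tsum_mul_tsum_of_summable_norm hT1h hT1h]
  -- split the double sum into even and odd parts
  set F : ℤ × ℤ → ℂ := fun p => T q 1 (1/2) p.1 * T q 1 (1/2) p.2 with hF
  set g₁ : ℤ × ℤ → ℂ := fun p => (1 + (-1:ℂ) ^ (p.1 + p.2)) / 2 * F p with hg₁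
  set g₂ : ℤ × ℤ → ℂ := fun p => (1 - (-1:ℂ) ^ (p.1 + p.2)) / 2 * F p with hg₂
  have hFsum : Summable F := summable_mul_of_summable_norm hT1h hT1h
  have hFsign : Summable fun p : ℤ × ℤ => (-1:ℂ) ^ (p.1 + p.2) * F p := by
    apply Summable.of_norm
    apply Summable.of_nonneg_of_le (fun _ => norm_nonneg _) (fun p => ?_)
      (hT1h.mul_norm hT1h).of_norm.norm
    rw [norm_mul, norm_zpow]
    simp [hF]
  have hg₁sum : Summable g₁ := by
    have : g₁ = fun p => (F p + (-1:ℂ) ^ (p.1 + p.2) * F p) / 2 := by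
      funext p; rw [hg₁]; ring
    rw [this]
    exact (hFsum.add hFsign).div_const 2
  have hg₂sum : Summable g₂ := by
    have : g₂ = fun p => (F p - (-1:ℂ) ^ (p.1 + p.2) * F p) / 2 := by
      funext p; rw [hg₂]; ring
    rw [this]
    exact (hFsum.sub hFsign).div_const 2
  have hsplit : ∀ p : ℤ × ℤ, F p = g₁ p + g₂ p := by
    intro p; rw [hg₁, hg₂]; ring
  rw [tsum_congr hsplit, Summable.tsum_add hg₁sum hg₂sum]
  -- even part: equals θ₂(q²) θ₃(q²)
  have h₁ : ∑' p : ℤ × ℤ, g₁ p = (∑' n : ℤ, T q 2 (1/2) n) * (∑' n : ℤ, T q 2 0 n) := by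
    have hinj : Injective fun p : ℤ × ℤ => (p.1 + p.2, p.1 - p.2) := by
      intro a b h
      simp only [Prod.mk.injEq, Prod.ext_iff] at h ⊢
      omega
    have hsupp : support g₁ ⊆ Set.range fun p : ℤ × ℤ => (p.1 + p.2, p.1 - p.2) := by
      intro p hp
      rcases Int.even_or_odd (p.1 + p.2) with he | ho
      · obtain ⟨k, hk⟩ := he
        exact ⟨(k, p.1 - k), by simp [Prod.ext_iff]; omega⟩
      · exact absurd (by simp [hg₁, ho.neg_one_zpow]) hp
    rw [← hinj.tsum_eq hsupp]
    have hpt : ∀ p : ℤ × ℤ,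
        g₁ ((p.1 + p.2, p.1 - p.2)) = T q 2 (1/2) p.1 * T q 2 0 p.2 := by
      intro p
      have he : Even ((p.1 + p.2) + (p.1 - p.2)) := ⟨p.1, by ring⟩
      rw [hg₁]
      simp only [hF]
      rw [he.neg_one_zpow, T_mul hq0,
        exp_congr (q := q) (by push_cast; ring :
          (1 * (((p.1 + p.2 : ℤ) : ℝ) + 1/2) ^ 2 + 1 * (((p.1 - p.2 : ℤ) : ℝ) + 1/2) ^ 2 : ℝ) =
            (2 * ((p.1 : ℝ) + 1/2) ^ 2 + 2 * ((p.2 : ℝ) + 0) ^ 2 : ℝ))]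
      rw [← T_mul hq0]
      ring
    rw [tsum_congr hpt, ← tsum_mul_tsum_of_summable_norm hT2h hT20]
  -- odd part: equals θ₃(q²) θ₂(q²)
  have h₂ : ∑' p : ℤ × ℤ, g₂ p = (∑' n : ℤ, T q 2 0 n) * (∑' n : ℤ, T q 2 (1/2) n) := by
    have hinj : Injective fun p : ℤ × ℤ => (p.1 + p.2, p.1 - p.2 - 1) := by
      intro a b h
      simp only [Prod.mk.injEq, Prod.ext_iff] at h ⊢
      omega
    have hsupp : support g₂ ⊆ Set.range fun p : ℤ × ℤ => (p.1 + p.2, p.1 - p.2 - 1) := by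
      intro p hp
      rcases Int.even_or_odd (p.1 + p.2) with he | ho
      · exact absurd (by simp [hg₂, he.neg_one_zpow]) hp
      · obtain ⟨k, hk⟩ := ho
        exact ⟨(k + 1, p.1 - k - 1), by simp [Prod.ext_iff]; omega⟩
    rw [← hinj.tsum_eq hsupp]
    have hpt : ∀ p : ℤ × ℤ,
        g₂ ((p.1 + p.2, p.1 - p.2 - 1)) = T q 2 0 p.1 * T q 2 (1/2) p.2 := by
      intro p
      have ho : Odd ((p.1 + p.2) + (p.1 - p.2 - 1)) := ⟨p.1 - 1, by ring⟩
      rw [hg₂]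
      simp only [hF]
      rw [ho.neg_one_zpow, T_mul hq0,
        exp_congr (q := q) (by push_cast; ring :
          (1 * (((p.1 + p.2 : ℤ) : ℝ) + 1/2) ^ 2 + 1 * (((p.1 - p.2 - 1 : ℤ) : ℝ) + 1/2) ^ 2 : ℝ) =
            (2 * ((p.1 : ℝ) + 0) ^ 2 + 2 * ((p.2 : ℝ) + 1/2) ^ 2 : ℝ))]
      rw [← T_mul hq0]
      ring
    rw [tsum_congr hpt, ← tsum_mul_tsum_of_summable_norm hT20 hT2h]
  rw [h₁, h₂]
  ring

end JacobiQuartic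

/-- Jacobi's quartic identity `θ₃⁴ = θ₄⁴ + θ₂⁴` for the null theta functions. -/
theorem jacobi_quartic_identity (q : ℂ) (hq : ‖q‖ < 1) :
    (∑' n : ℤ, q ^ (n.natAbs ^ 2)) ^ 4 =
      (∑' n : ℤ, (-1 : ℂ) ^ n * q ^ (n.natAbs ^ 2)) ^ 4 +
      (∑' n : ℤ, q ^ ((((n : ℂ) + 1 / 2) ^ 2) : ℂ)) ^ 4 := by
  rcases eq_or_ne q 0 with rfl | hq0
  · have h3 : (∑' n : ℤ, (0:ℂ) ^ (n.natAbs ^ 2)) = 1 := by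
      rw [tsum_eq_single (0 : ℤ)]
      · simp
      · intro n hn
        simp [pow_eq_zero_iff, Int.natAbs_eq_zero, hn]
    have h4 : (∑' n : ℤ, (-1 : ℂ) ^ n * (0:ℂ) ^ (n.natAbs ^ 2)) = 1 := by
      rw [tsum_eq_single (0 : ℤ)]
      · simp
      · intro n hn
        simp [pow_eq_zero_iff, Int.natAbs_eq_zero, hn]
    have h2 : (∑' n : ℤ, (0:ℂ) ^ ((((n : ℂ) + 1 / 2) ^ 2) : ℂ)) = 0 := by
      have : ∀ n : ℤ, (0:ℂ) ^ ((((n : ℂ) + 1 / 2) ^ 2) : ℂ) = 0 := by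
        intro n
        apply Complex.zero_cpow
        intro h
        have h5 : ((n : ℂ) + 1 / 2) = 0 := by
          exact pow_eq_zero_iff (by norm_num) |>.mp h
        have : ((2 * n + 1 : ℤ) : ℂ) = 0 := by push_cast; linear_combination 2 * h5
        have : (2 * n + 1 : ℤ) = 0 := by exact_mod_cast this
        omega
      rw [tsum_congr this, tsum_zero]
    rw [h3, h4, h2]
    norm_num
  · have e3 : ∀ n : ℤ, q ^ (n.natAbs ^ 2) = JacobiQuartic.T q 1 0 n := by
      intro n
      rw [JacobiQuartic.T, show ((1 * ((n : ℝ) + 0) ^ 2 : ℝ) : ℂ) = ((n.natAbs ^ 2 : ℕ) : ℂ) by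
        rw [JacobiQuartic.natAbs_sq_cast]; push_cast; ring, Complex.cpow_natCast]
    have e2 : ∀ n : ℤ, q ^ ((((n : ℂ) + 1 / 2) ^ 2) : ℂ) = JacobiQuartic.T q 1 (1/2) n := by
      intro n
      rw [JacobiQuartic.T]
      congr 1
      push_cast
      ring
    simp only [e3, e2]
    set A := ∑' n : ℤ, JacobiQuartic.T q 1 0 n
    set B := ∑' n : ℤ, (-1 : ℂ) ^ n * JacobiQuartic.T q 1 0 n
    set C := ∑' n : ℤ, JacobiQuartic.T q 1 (1/2) n
    set P := ∑' n : ℤ, JacobiQuartic.T q 2 0 n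
    set Q := ∑' n : ℤ, JacobiQuartic.T q 2 (1/2) n
    have h1 : A ^ 2 + B ^ 2 = 2 * P ^ 2 := JacobiQuartic.add_sq hq0 hq
    have h2 : A ^ 2 - B ^ 2 = 2 * Q ^ 2 := JacobiQuartic.sub_sq hq0 hq
    have h3 : C ^ 2 = 2 * (P * Q) := JacobiQuartic.two_sq hq0 hq
    linear_combination (A ^ 2 - B ^ 2) * h1 + 2 * P ^ 2 * h2 - (C ^ 2 + 2 * (P * Q)) * h3
end

section
/- The Jacobi triple product identity: for |ab| < 1 with a, b nonzero, ∑_{n∈ℤ} a^{n(n+1)/2} b^{n(n-1)/2} = ∏_{k≥0} (1 + a(ab)ᵏ)(1 + b(ab)ᵏ)(1 - (ab)^{k+1}). -/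
open Filter Topology

noncomputable def Complex.abs : AbsoluteValue ℂ ℝ := IsAbsoluteValue.toAbsoluteValue (norm : ℂ → ℝ)

lemma Complex.norm_eq_abs (z : ℂ) : ‖z‖ = Complex.abs z := rfl

lemma Complex.abs_ofReal (r : ℝ) : Complex.abs (r : ℂ) = |r| := Complex.norm_real r

lemma Complex.continuous_abs : Continuous Complex.abs := continuous_norm

noncomputable def qfac (q : ℂ) (N : ℕ) : ℂ := ∏ j ∈ Finset.range N, (1 - q ^ (j + 1))

noncomputable def gb (q : ℂ) (M : ℕ) (k : ℤ) : ℂ :=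
  if 0 ≤ k ∧ k ≤ (M : ℤ) then qfac q M / (qfac q k.toNat * qfac q (M - k.toNat)) else 0

lemma qfac_succ (q : ℂ) (N : ℕ) : qfac q (N + 1) = qfac q N * (1 - q ^ (N + 1)) :=
  Finset.prod_range_succ _ _

lemma qfac_zero (q : ℂ) : qfac q 0 = 1 := by simp [qfac]

lemma one_sub_pow_ne {q : ℂ} (hq : Complex.abs q < 1) (j : ℕ) (hj : j ≠ 0) :
    1 - q ^ j ≠ 0 := by
  intro h
  have h1 : q ^ j = 1 := by linear_combination -h
  have : Complex.abs (q ^ j) < 1 := by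
    rw [map_pow]; exact pow_lt_one₀ (Complex.abs.nonneg q) hq hj
  rw [h1] at this; simp at this

lemma qfac_ne_zero {q : ℂ} (hq : Complex.abs q < 1) (N : ℕ) : qfac q N ≠ 0 := by
  rw [qfac]
  exact Finset.prod_ne_zero_iff.2 fun j _ => one_sub_pow_ne hq (j + 1) j.succ_ne_zero

lemma gb_eq_zero (q : ℂ) (M : ℕ) (k : ℤ) (h : k < 0 ∨ (M : ℤ) < k) : gb q M k = 0 := by
  rw [gb, if_neg]; omega

lemma gb_natCast (q : ℂ) (M j : ℕ) (h : j ≤ M) :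
    gb q M (j : ℤ) = qfac q M / (qfac q j * qfac q (M - j)) := by
  rw [gb, if_pos (by omega)]; simp


private lemma key_interior (q c d e u v : ℂ) (hc : c ≠ 0) (hd : d ≠ 0)
    (hu : 1 - u ≠ 0) (huq : 1 - u * q ≠ 0) (hv : 1 - v ≠ 0) (hvq : 1 - v * q ≠ 0) :
    e * (1 - u * v * q) * (1 - u * v * q ^ 2) /
        (c * (1 - u) * (1 - u * q) * (d * (1 - v) * (1 - v * q)))
      = (1 + u * v * q) * (e / (c * (1 - u) * (d * (1 - v))))
        + v * q * (e / (c * (d * (1 - v) * (1 - v * q))))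
        + u * q * (e / (c * (1 - u) * (1 - u * q) * d)) := by
  rw [mul_div_assoc', mul_div_assoc', mul_div_assoc',
    div_add_div _ _ (by apply_rules [mul_ne_zero]) (by apply_rules [mul_ne_zero]),
    div_add_div _ _ (by apply_rules [mul_ne_zero]) (by apply_rules [mul_ne_zero]),
    div_eq_div_iff (by apply_rules [mul_ne_zero]) (by apply_rules [mul_ne_zero])]
  ring

private lemma key_left (q d v : ℂ) (hd : d ≠ 0) (hq1 : 1 - q ≠ 0)
    (hv : 1 - v ≠ 0) (hvq : 1 - v * q ≠ 0) :
    d * (1 - v) * (1 - v * q) * (1 - v * q ^ 2) / (1 * (1 - q) * (d * (1 - v) * (1 - v * q)))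
      = (1 + v * q) * (d * (1 - v) / (1 * (d * (1 - v)))) + v * q * 0
        + q * (d * (1 - v) / (1 * (1 - q) * d)) := by
  rw [mul_div_assoc', mul_div_assoc', mul_zero, add_zero,
    div_add_div _ _ (by apply_rules [mul_ne_zero, one_ne_zero])
      (by apply_rules [mul_ne_zero, one_ne_zero]),
    div_eq_div_iff (by apply_rules [mul_ne_zero, one_ne_zero])
      (by apply_rules [mul_ne_zero, one_ne_zero])]
  ring

private lemma key_right (q c u : ℂ) (hc : c ≠ 0) (hq1 : 1 - q ≠ 0)
    (hu : 1 - u ≠ 0) (huq : 1 - u * q ≠ 0) :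
    c * (1 - u) * (1 - u * q) * (1 - u * q ^ 2) / (c * (1 - u) * (1 - u * q) * (1 - q))
      = (1 + u * q) * (c * (1 - u) / (c * (1 - u) * 1))
        + q * (c * (1 - u) / (c * (1 - q))) + u * q * 0 := by
  rw [mul_div_assoc', mul_div_assoc', mul_zero, add_zero,
    div_add_div _ _ (by apply_rules [mul_ne_zero, one_ne_zero])
      (by apply_rules [mul_ne_zero, one_ne_zero]),
    div_eq_div_iff (by apply_rules [mul_ne_zero, one_ne_zero])
      (by apply_rules [mul_ne_zero, one_ne_zero])]
  ring

lemma gb_rec {q : ℂ} (hq : Complex.abs q < 1) (M : ℕ) (k : ℤ) :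
    gb q (M + 2) (k + 1) =
      (1 + q ^ (M + 1)) * gb q M k + q ^ ((M : ℤ) + 1 - k) * gb q M (k - 1)
        + q ^ (k + 1) * gb q M (k + 1) := by
  have A := qfac_ne_zero hq
  have B : ∀ n : ℕ, (1 - q ^ (n + 1)) ≠ 0 := fun n => one_sub_pow_ne hq _ n.succ_ne_zero
  rcases lt_or_ge k (-1) with hk | hk
  · rw [gb_eq_zero q (M + 2) (k + 1) (Or.inl (by omega)),
      gb_eq_zero q M k (Or.inl (by omega)), gb_eq_zero q M (k - 1) (Or.inl (by omega)),
      gb_eq_zero q M (k + 1) (Or.inl (by omega))]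
    ring
  rcases eq_or_lt_of_le hk with hk1 | hk
  · -- k = -1
    obtain rfl : k = -1 := hk1.symm
    rw [gb_eq_zero q M (-1) (Or.inl (by omega)),
      gb_eq_zero q M (-1 - 1) (Or.inl (by omega)),
      show ((-1 : ℤ) + 1) = ((0 : ℕ) : ℤ) from rfl,
      gb_natCast q (M + 2) 0 (by omega), gb_natCast q M 0 (by omega)]
    simp [qfac_zero, div_self (A (M + 2)), div_self (A M)]
  rcases lt_or_ge ((M : ℤ) + 1) k with hk2 | hk2
  · -- k ≥ M + 2
    rw [gb_eq_zero q (M + 2) (k + 1) (Or.inr (by omega)),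
      gb_eq_zero q M k (Or.inr (by omega)), gb_eq_zero q M (k - 1) (Or.inr (by omega)),
      gb_eq_zero q M (k + 1) (Or.inr (by omega))]
    ring
  rcases eq_or_lt_of_le hk2 with hk2 | hk2
  · -- k = M + 1
    obtain rfl : k = (M : ℤ) + 1 := hk2
    rw [gb_eq_zero q M ((M : ℤ) + 1) (Or.inr (by omega)),
      gb_eq_zero q M ((M : ℤ) + 1 + 1) (Or.inr (by omega)),
      show ((M : ℤ) + 1 + 1) = (((M + 2 : ℕ)) : ℤ) from by omega,
      show ((M : ℤ) + 1 - 1) = ((M : ℕ) : ℤ) from by ring,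
      gb_natCast q (M + 2) (M + 2) le_rfl, gb_natCast q M M le_rfl,
      show ((M : ℤ) + 1 - ((M : ℤ) + 1)) = (0 : ℤ) from by ring]
    simp [Nat.sub_self, qfac_zero, div_self (A (M + 2)), div_self (A M)]
  · -- 0 ≤ k ≤ M
    have hk0 : 0 ≤ k := by omega
    lift k to ℕ using hk0 with j
    have hjM : j ≤ M := by exact_mod_cast (by omega : (j : ℤ) ≤ (M : ℤ))
    rw [show ((j : ℤ) + 1) = ((j + 1 : ℕ) : ℤ) from by push_cast; ring] at *
    rcases Nat.eq_zero_or_pos j with rfl | hj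
    · -- j = 0
      rw [gb_eq_zero q M (((0 : ℕ) : ℤ) - 1) (Or.inl (by omega))]
      rcases Nat.eq_zero_or_pos M with rfl | hM
      · -- M = 0
        have hq1 : (1 : ℂ) - q ≠ 0 := by simpa using B 0
        rw [gb_eq_zero q 0 (((0 + 1 : ℕ)) : ℤ) (Or.inr (by omega)),
          gb_natCast q (0 + 2) (0 + 1) (by omega), gb_natCast q 0 0 le_rfl]
        rw [zpow_natCast]
        rw [show (0 + 2 : ℕ) = (0 + 1) + 1 from rfl, qfac_succ, qfac_succ, qfac_zero]
        norm_num
        field_simp [hq1]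
        ring
      · -- M ≥ 1
        obtain ⟨m, rfl⟩ : ∃ m, M = m + 1 := ⟨M - 1, by omega⟩
        rw [gb_natCast q (m + 1 + 2) (0 + 1) (by omega), gb_natCast q (m + 1) 0 (by omega),
          gb_natCast q (m + 1) (0 + 1) (by omega)]
        rw [zpow_natCast]
        rw [show ((m + 1 : ℕ) : ℤ) + 1 - ((0 : ℕ) : ℤ) = ((m + 2 : ℕ) : ℤ) from by omega,
          zpow_natCast]
        rw [show m + 1 + 2 - (0 + 1) = m + 2 from by omega,
          show m + 1 - 0 = m + 1 from by omega, show m + 1 - (0 + 1) = m from by omega]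
        rw [show m + 1 + 2 = ((m + 2) + 1) from rfl, qfac_succ,
          show m + 2 = (m + 1) + 1 from rfl, qfac_succ, qfac_succ,
          show (0 + 1 : ℕ) = 0 + 1 from rfl, qfac_succ]
        rw [qfac_zero]
        rw [show q ^ (m + 2) = q ^ (m + 1) * q from by ring,
          show q ^ (m + 3) = q ^ (m + 1) * q ^ 2 from by ring,
          show q ^ (0 + 1) = q from by ring]
        have hq1 : (1 : ℂ) - q ≠ 0 := by simpa using B 0
        exact key_left q (qfac q m) (q ^ (m + 1)) (A m) hq1 (B m)
          (by rw [show q ^ (m + 1) * q = q ^ (m + 1 + 1) from by ring]; exact B (m + 1))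
    · -- j ≥ 1
      obtain ⟨i, rfl⟩ : ∃ i, j = i + 1 := ⟨j - 1, by omega⟩
      rcases eq_or_lt_of_le hjM with rfl | hjM'
      · -- j = M
        rw [gb_eq_zero q (i + 1) (((i + 1 + 1 : ℕ)) : ℤ) (Or.inr (by omega))]
        rw [show ((i + 1 : ℕ) : ℤ) - 1 = ((i : ℕ) : ℤ) from by push_cast; ring]
        rw [gb_natCast q (i + 1 + 2) (i + 1 + 1) (by omega),
          gb_natCast q (i + 1) (i + 1) le_rfl, gb_natCast q (i + 1) i (by omega)]
        rw [show ((i + 1 : ℕ) : ℤ) + 1 - ((i + 1 : ℕ) : ℤ) = ((1 : ℕ) : ℤ) from by omega,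
          zpow_natCast]
        rw [zpow_natCast]
        rw [show i + 1 + 2 - (i + 1 + 1) = 1 from by omega, Nat.sub_self,
          show i + 1 - i = 1 from by omega]
        have e1 : qfac q 1 = 1 - q ^ 1 := by simp [qfac]
        rw [show i + 1 + 2 = ((i + 1 + 1) + 1) from rfl, qfac_succ, qfac_succ, qfac_succ,
          qfac_zero, e1]
        rw [show q ^ (i + 1 + 1) = q ^ (i + 1) * q from by ring,
          show q ^ (i + 2 + 1) = q ^ (i + 1) * q ^ 2 from by ring,
          show q ^ (1 : ℕ) = q from by ring]
        have hq1 : (1 : ℂ) - q ≠ 0 := by simpa using B 0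
        exact key_right q (qfac q i) (q ^ (i + 1)) (A i) hq1 (B i)
          (by rw [show q ^ (i + 1) * q = q ^ (i + 1 + 1) from by ring]; exact B (i + 1))
      · -- 1 ≤ j ≤ M - 1
        obtain ⟨m, rfl⟩ : ∃ m, M = i + m + 2 := ⟨M - i - 2, by omega⟩
        rw [show ((i + 1 : ℕ) : ℤ) - 1 = ((i : ℕ) : ℤ) from by push_cast; ring]
        rw [gb_natCast q (i + m + 2 + 2) (i + 1 + 1) (by omega),
          gb_natCast q (i + m + 2) (i + 1) (by omega),
          gb_natCast q (i + m + 2) i (by omega),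
          gb_natCast q (i + m + 2) (i + 1 + 1) (by omega)]
        rw [show ((i + m + 2 : ℕ) : ℤ) + 1 - ((i + 1 : ℕ) : ℤ) = ((m + 2 : ℕ) : ℤ) from by
            push_cast; ring, zpow_natCast]
        rw [zpow_natCast]
        rw [show i + m + 2 + 2 - (i + 1 + 1) = m + 2 from by omega,
          show i + m + 2 - (i + 1) = m + 1 from by omega,
          show i + m + 2 - i = m + 2 from by omega,
          show i + m + 2 - (i + 1 + 1) = m from by omega]
        have f2 : ∀ n : ℕ, qfac q (n + 2) = qfac q n * (1 - q ^ (n + 1)) * (1 - q ^ (n + 2)) := by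
          intro n
          rw [show n + 2 = (n + 1) + 1 from rfl, qfac_succ, qfac_succ]
        rw [show i + m + 2 + 2 = (i + m + 2) + 2 from rfl, f2 (i + m + 2),
          show i + 1 + 1 = i + 2 from rfl, f2 i, f2 m,
          show m + 1 = m + 1 from rfl, qfac_succ q m, qfac_succ q i]
        have b1 := B i
        have b2 := B (i + 1)
        have b3 := B m
        have b4 := B (m + 1)
        have b5 := B (i + m + 2)
        have b6 := B (i + m + 3)
        rw [show i + 2 = i + 1 + 1 from rfl, show m + 2 = m + 1 + 1 from rfl,
          show i + m + 2 + 1 = i + m + 3 from rfl, show i + m + 2 + 2 = i + m + 3 + 1 from rfl]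
        rw [show q ^ (i + 1 + 1) = q ^ (i + 1) * q from by ring,
          show q ^ (m + 1 + 1) = q ^ (m + 1) * q from by ring,
          show q ^ (i + m + 3) = q ^ (i + 1) * q ^ (m + 1) * q from by ring,
          show q ^ (i + m + 3 + 1) = q ^ (i + 1) * q ^ (m + 1) * q ^ 2 from by ring]
        exact key_interior q (qfac q i) (qfac q m) (qfac q (i + m + 2)) (q ^ (i + 1))
          (q ^ (m + 1)) (A i) (A m) (B i)
          (by rw [show q ^ (i + 1) * q = q ^ (i + 1 + 1) from by ring]; exact B (i + 1)) (B m)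
          (by rw [show q ^ (m + 1) * q = q ^ (m + 1 + 1) from by ring]; exact B (m + 1))

lemma e_succ (n : ℤ) : (n + 1) * ((n + 1) - 1) / 2 = n * (n - 1) / 2 + n := by
  rw [show (n + 1) * ((n + 1) - 1) = n * (n - 1) + n * 2 from by ring,
    Int.add_mul_ediv_right _ _ (by norm_num)]

lemma e_pred (n : ℤ) : (n - 1) * ((n - 1) - 1) / 2 = n * (n - 1) / 2 - (n - 1) := by
  rw [show (n - 1) * ((n - 1) - 1) = n * (n - 1) + (-(n - 1)) * 2 from by ring,
    Int.add_mul_ediv_right _ _ (by norm_num)]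
  ring

lemma mid_term (a q : ℂ) (ha : a ≠ 0) (hq0 : q ≠ 0) (N : ℕ) (n : ℤ) :
    q ^ ((N : ℤ) + 1 - n) * (a ^ n * q ^ (n * (n - 1) / 2))
      = (a * q ^ N) * (a ^ (n - 1) * q ^ ((n - 1) * ((n - 1) - 1) / 2)) := by
  have hA : a ^ n ≠ 0 := zpow_ne_zero _ ha
  have hQ : q ^ n ≠ 0 := zpow_ne_zero _ hq0
  rw [e_pred n, zpow_sub₀ hq0 (n * (n - 1) / 2) (n - 1),
    zpow_sub₀ hq0 n 1, zpow_sub₀ ha n 1,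
    show (N : ℤ) + 1 - n = ((N + 1 : ℕ) : ℤ) - n from by omega,
    zpow_sub₀ hq0 _ n, zpow_natCast, zpow_one, zpow_one]
  rw [pow_succ]
  field_simp

lemma last_term (a b q : ℂ) (ha : a ≠ 0) (hb : b ≠ 0) (hq : q = a * b) (N : ℕ) (n : ℤ) :
    q ^ ((N : ℤ) + n + 1) * (a ^ n * q ^ (n * (n - 1) / 2))
      = (b * q ^ N) * (a ^ (n + 1) * q ^ ((n + 1) * ((n + 1) - 1) / 2)) := by
  have hq0 : q ≠ 0 := by rw [hq]; exact mul_ne_zero ha hb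
  have hA : a ^ n ≠ 0 := zpow_ne_zero _ ha
  have hQ : q ^ n ≠ 0 := zpow_ne_zero _ hq0
  rw [e_succ n, zpow_add₀ hq0 (n * (n - 1) / 2) n, zpow_add₀ ha n 1, zpow_one,
    show (N : ℤ) + n + 1 = ((N + 1 : ℕ) : ℤ) + n from by omega,
    zpow_add₀ hq0 _ n, zpow_natCast, pow_succ]
  rw [hq]
  ring

lemma finite_jtp (a b : ℂ) (ha : a ≠ 0) (hb : b ≠ 0) (hq : Complex.abs (a * b) < 1) (N : ℕ) :
    ∑' n : ℤ, gb (a * b) (2 * N) ((N : ℤ) + n) * (a ^ n * (a * b) ^ (n * (n - 1) / 2))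
      = ∏ k ∈ Finset.range N, ((1 + a * (a * b) ^ k) * (1 + b * (a * b) ^ k)) := by
  set q : ℂ := a * b with hqdef
  have hq0 : q ≠ 0 := mul_ne_zero ha hb
  induction N with
  | zero =>
      rw [Finset.prod_range_zero]
      rw [tsum_eq_single 0 (fun n hn => by
        rw [gb_eq_zero _ _ _ (by omega), zero_mul])]
      norm_num
      rw [gb, if_pos (by norm_num)]
      simp [qfac_zero]
  | succ N ih =>
      rw [Finset.prod_range_succ, ← ih]
      have S0 : Summable (fun n : ℤ =>
          gb q (2 * N) ((N : ℤ) + n) * (a ^ n * q ^ (n * (n - 1) / 2))) := by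
        apply summable_of_ne_finset_zero (s := Finset.Icc (-(N : ℤ) - 1) ((N : ℤ) + 1))
        intro n hn
        rw [Finset.mem_Icc] at hn
        rw [gb_eq_zero _ _ _ (by push_cast; omega), zero_mul]
      have S1 : Summable (fun n : ℤ =>
          gb q (2 * N) ((N : ℤ) + (n - 1)) * (a ^ (n - 1) * q ^ ((n - 1) * ((n - 1) - 1) / 2))) := by
        apply summable_of_ne_finset_zero (s := Finset.Icc (-(N : ℤ) - 2) ((N : ℤ) + 2))
        intro n hn
        rw [Finset.mem_Icc] at hn
        rw [gb_eq_zero _ _ _ (by push_cast; omega), zero_mul]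
      have S2 : Summable (fun n : ℤ =>
          gb q (2 * N) ((N : ℤ) + (n + 1)) * (a ^ (n + 1) * q ^ ((n + 1) * ((n + 1) - 1) / 2))) := by
        apply summable_of_ne_finset_zero (s := Finset.Icc (-(N : ℤ) - 2) ((N : ℤ) + 2))
        intro n hn
        rw [Finset.mem_Icc] at hn
        rw [gb_eq_zero _ _ _ (by push_cast; omega), zero_mul]
      have hrec : ∀ n : ℤ,
          gb q (2 * (N + 1)) (((N + 1 : ℕ) : ℤ) + n) * (a ^ n * q ^ (n * (n - 1) / 2))
            = (1 + q ^ (2 * N + 1)) * (gb q (2 * N) ((N : ℤ) + n) * (a ^ n * q ^ (n * (n - 1) / 2)))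
              + ((a * q ^ N) * (gb q (2 * N) ((N : ℤ) + (n - 1)) * (a ^ (n - 1) * q ^ ((n - 1) * ((n - 1) - 1) / 2)))
              + (b * q ^ N) * (gb q (2 * N) ((N : ℤ) + (n + 1)) * (a ^ (n + 1) * q ^ ((n + 1) * ((n + 1) - 1) / 2)))) := by
        intro n
        have h0 := gb_rec hq (2 * N) ((N : ℤ) + n)
        rw [show 2 * (N + 1) = 2 * N + 2 from by ring,
          show ((N + 1 : ℕ) : ℤ) + n = ((N : ℤ) + n) + 1 from by omega, h0,
          show ((2 * N : ℕ) : ℤ) + 1 - ((N : ℤ) + n) = (N : ℤ) + 1 - n from by omega,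
          show gb q (2 * N) ((N : ℤ) + n - 1) = gb q (2 * N) ((N : ℤ) + (n - 1)) from by
            rw [show (N : ℤ) + n - 1 = (N : ℤ) + (n - 1) from by ring],
          show gb q (2 * N) ((N : ℤ) + n + 1) = gb q (2 * N) ((N : ℤ) + (n + 1)) from by
            rw [show (N : ℤ) + n + 1 = (N : ℤ) + (n + 1) from by ring]]
        linear_combination (gb q (2 * N) ((N : ℤ) + (n - 1))) * mid_term a q ha hq0 N n
          + (gb q (2 * N) ((N : ℤ) + (n + 1))) * last_term a b q ha hb hqdef N n
      rw [tsum_congr hrec, Summable.tsum_add (S0.mul_left _) (Summable.add (S1.mul_left _) (S2.mul_left _)),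
        Summable.tsum_add (S1.mul_left _) (S2.mul_left _), tsum_mul_left, tsum_mul_left, tsum_mul_left]
      have e1 : ∑' n : ℤ, gb q (2 * N) ((N : ℤ) + (n - 1)) * (a ^ (n - 1) * q ^ ((n - 1) * ((n - 1) - 1) / 2))
          = ∑' n : ℤ, gb q (2 * N) ((N : ℤ) + n) * (a ^ n * q ^ (n * (n - 1) / 2)) := by
        have := (Equiv.subRight (1 : ℤ)).tsum_eq
          (fun m : ℤ => gb q (2 * N) ((N : ℤ) + m) * (a ^ m * q ^ (m * (m - 1) / 2)))
        simp only [Equiv.subRight_apply] at this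
        exact this
      have e2 : ∑' n : ℤ, gb q (2 * N) ((N : ℤ) + (n + 1)) * (a ^ (n + 1) * q ^ ((n + 1) * ((n + 1) - 1) / 2))
          = ∑' n : ℤ, gb q (2 * N) ((N : ℤ) + n) * (a ^ n * q ^ (n * (n - 1) / 2)) := by
        have := (Equiv.addRight (1 : ℤ)).tsum_eq
          (fun m : ℤ => gb q (2 * N) ((N : ℤ) + m) * (a ^ m * q ^ (m * (m - 1) / 2)))
        simp only [Equiv.coe_addRight] at this
        exact this
      rw [e1, e2, hqdef]
      ring

lemma summable_pow_succ {w : ℂ} (hw : Complex.abs w < 1) :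
    Summable (fun k : ℕ => w ^ (k + 1)) := by
  have h : ‖w‖ < 1 := by simpa [Complex.norm_eq_abs] using hw
  exact ((summable_geometric_of_norm_lt_one h).mul_left w).congr
    (fun k => (pow_succ' w k).symm)

lemma summable_log_one_sub {w : ℂ} (hw : Complex.abs w < 1) :
    Summable (fun k : ℕ => Complex.log (1 - w ^ (k + 1))) :=
  (summable_pow_succ hw).clog_one_sub

lemma mult_one_sub {w : ℂ} (hw : Complex.abs w < 1) :
    Multipliable (fun k : ℕ => 1 - w ^ (k + 1)) :=
  Complex.multipliable_of_summable_log (summable_log_one_sub hw)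

lemma tprod_one_sub_ne {w : ℂ} (hw : Complex.abs w < 1) :
    (∏' k : ℕ, (1 - w ^ (k + 1))) ≠ 0 := by
  have h2 := Complex.cexp_tsum_eq_tprod (f := fun k : ℕ => 1 - w ^ (k + 1))
    (fun k => one_sub_pow_ne hw _ k.succ_ne_zero) (summable_log_one_sub hw)
  rw [← h2]
  exact Complex.exp_ne_zero _

lemma tendsto_qfac {w : ℂ} (hw : Complex.abs w < 1) :
    Filter.Tendsto (fun N => qfac w N) Filter.atTop (𝓝 (∏' k : ℕ, (1 - w ^ (k + 1)))) := by
  have := (mult_one_sub hw).hasProd.tendsto_prod_nat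
  simpa [qfac] using this

lemma hasProd_zero_of_zero {f : ℕ → ℂ} (k0 : ℕ) (h : f k0 = 0) : HasProd f 0 := by
  refine Filter.Tendsto.congr' ?_ tendsto_const_nhds
  filter_upwards [Filter.eventually_ge_atTop ({k0} : Finset ℕ)] with s hs
  exact (Finset.prod_eq_zero (hs (Finset.mem_singleton_self k0)) h).symm


lemma rfac_nonneg {q : ℂ} (hq : Complex.abs q < 1) (N : ℕ) :
    0 ≤ ∏ j ∈ Finset.range N, (1 - Complex.abs q ^ (j + 1)) := by
  apply Finset.prod_nonneg
  intro j _
  have : Complex.abs q ^ (j + 1) ≤ 1 := pow_le_one₀ (Complex.abs.nonneg q) hq.le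
  linarith

lemma rfac_antitone {q : ℂ} (hq : Complex.abs q < 1) :
    Antitone (fun N => ∏ j ∈ Finset.range N, (1 - Complex.abs q ^ (j + 1))) := by
  apply antitone_nat_of_succ_le
  intro N
  rw [Finset.prod_range_succ]
  apply mul_le_of_le_one_right (rfac_nonneg hq N)
  have : 0 ≤ Complex.abs q ^ (N + 1) := pow_nonneg (Complex.abs.nonneg q) _
  linarith

lemma abs_qfac_real {q : ℂ} (hq : Complex.abs q < 1) (N : ℕ) :
    Complex.abs (qfac ((Complex.abs q : ℝ) : ℂ) N)
      = ∏ j ∈ Finset.range N, (1 - Complex.abs q ^ (j + 1)) := by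
  rw [qfac, map_prod]
  apply Finset.prod_congr rfl
  intro j _
  have h1 : (1 : ℂ) - ((Complex.abs q : ℝ) : ℂ) ^ (j + 1)
      = (((1 - Complex.abs q ^ (j + 1) : ℝ)) : ℂ) := by push_cast; ring
  rw [h1, Complex.abs_ofReal, abs_of_nonneg]
  have : Complex.abs q ^ (j + 1) ≤ 1 := pow_le_one₀ (Complex.abs.nonneg q) hq.le
  linarith

/-- The positive lower bound for partial products. -/
noncomputable def cI (q : ℂ) : ℝ :=
  Complex.abs (∏' k : ℕ, (1 - ((Complex.abs q : ℝ) : ℂ) ^ (k + 1)))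

lemma abs_coe_lt {q : ℂ} (hq : Complex.abs q < 1) :
    Complex.abs ((Complex.abs q : ℝ) : ℂ) < 1 := by
  rwa [Complex.abs_ofReal, abs_of_nonneg (Complex.abs.nonneg q)]

lemma cI_pos {q : ℂ} (hq : Complex.abs q < 1) : 0 < cI q := by
  have := tprod_one_sub_ne (abs_coe_lt hq)
  simpa [cI, Complex.abs.pos_iff] using this

lemma cI_le_rfac {q : ℂ} (hq : Complex.abs q < 1) (N : ℕ) :
    cI q ≤ ∏ j ∈ Finset.range N, (1 - Complex.abs q ^ (j + 1)) := by
  have h1 : Filter.Tendsto (fun M => Complex.abs (qfac ((Complex.abs q : ℝ) : ℂ) M))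
      Filter.atTop (𝓝 (cI q)) :=
    (Complex.continuous_abs.tendsto _).comp (tendsto_qfac (abs_coe_lt hq))
  apply le_of_tendsto h1
  filter_upwards [Filter.eventually_ge_atTop N] with M hM
  rw [abs_qfac_real hq]
  exact rfac_antitone hq hM

lemma rfac_le_abs_qfac {q : ℂ} (hq : Complex.abs q < 1) (N : ℕ) :
    ∏ j ∈ Finset.range N, (1 - Complex.abs q ^ (j + 1)) ≤ Complex.abs (qfac q N) := by
  rw [qfac, map_prod]
  apply Finset.prod_le_prod
  · intro j _
    have : Complex.abs q ^ (j + 1) ≤ 1 := pow_le_one₀ (Complex.abs.nonneg q) hq.le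
    linarith
  · intro j _
    have h2 : ‖(1 : ℂ)‖ - ‖q ^ (j + 1)‖ ≤ ‖(1 : ℂ) - q ^ (j + 1)‖ := norm_sub_norm_le _ _
    rw [Complex.norm_eq_abs, Complex.norm_eq_abs, Complex.norm_eq_abs, map_pow] at h2
    simpa using h2

lemma cI_le_abs_qfac {q : ℂ} (hq : Complex.abs q < 1) (N : ℕ) :
    cI q ≤ Complex.abs (qfac q N) :=
  (cI_le_rfac hq N).trans (rfac_le_abs_qfac hq N)

/-- Upper bound for partial products. -/
noncomputable def cU (q : ℂ) : ℝ := Real.exp (Complex.abs q / (1 - Complex.abs q))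

lemma abs_qfac_le {q : ℂ} (hq : Complex.abs q < 1) (N : ℕ) :
    Complex.abs (qfac q N) ≤ cU q := by
  have ht0 : 0 ≤ Complex.abs q := Complex.abs.nonneg q
  rw [qfac, map_prod]
  calc ∏ j ∈ Finset.range N, Complex.abs (1 - q ^ (j + 1))
      ≤ ∏ j ∈ Finset.range N, Real.exp (Complex.abs q ^ (j + 1)) := by
        apply Finset.prod_le_prod (fun j _ => Complex.abs.nonneg _)
        intro j _
        have h2 : ‖(1 : ℂ) - q ^ (j + 1)‖ ≤ ‖(1 : ℂ)‖ + ‖q ^ (j + 1)‖ := norm_sub_le _ _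
        rw [Complex.norm_eq_abs, Complex.norm_eq_abs, Complex.norm_eq_abs, map_pow] at h2
        have h3 := Real.add_one_le_exp (Complex.abs q ^ (j + 1))
        simp only [map_one] at h2
        linarith
    _ = Real.exp (∑ j ∈ Finset.range N, Complex.abs q ^ (j + 1)) := (Real.exp_sum _ _).symm
    _ ≤ cU q := by
        apply Real.exp_le_exp.2
        have h1 : ∑ j ∈ Finset.range N, Complex.abs q ^ (j + 1)
            = Complex.abs q * ∑ j ∈ Finset.range N, Complex.abs q ^ j := by
          rw [Finset.mul_sum]
          exact Finset.sum_congr rfl (fun j _ => pow_succ' _ _)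
        rw [h1, div_eq_mul_inv]
        apply mul_le_mul_of_nonneg_left _ ht0
        calc ∑ j ∈ Finset.range N, Complex.abs q ^ j
            ≤ ∑' j : ℕ, Complex.abs q ^ j :=
              Summable.sum_le_tsum _ (fun j _ => pow_nonneg ht0 j) (summable_geometric_of_lt_one ht0 hq)
          _ = (1 - Complex.abs q)⁻¹ := tsum_geometric_of_lt_one ht0 hq

/-- Uniform bound for the Gaussian-binomial-like coefficients. -/
noncomputable def cB (q : ℂ) : ℝ := cU q / (cI q * cI q)

lemma abs_gb_le {q : ℂ} (hq : Complex.abs q < 1) (M : ℕ) (k : ℤ) :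
    Complex.abs (gb q M k) ≤ cB q := by
  have hI := cI_pos hq
  have hII : 0 < cI q * cI q := mul_pos hI hI
  rw [gb]
  split_ifs with h
  · rw [map_div₀, map_mul]
    apply div_le_div₀ (le_of_lt (Real.exp_pos _)) (abs_qfac_le hq M) hII
    exact mul_le_mul (cI_le_abs_qfac hq _) (cI_le_abs_qfac hq _) hI.le (Complex.abs.nonneg _)
  · simp only [map_zero]
    unfold cB cU
    positivity

lemma term_succ_abs (a q : ℂ) (ha : a ≠ 0) (hq0 : q ≠ 0) (n : ℤ) :
    Complex.abs (a ^ (n + 1) * q ^ ((n + 1) * ((n + 1) - 1) / 2))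
      = (Complex.abs a * Complex.abs (q ^ n))
        * Complex.abs (a ^ n * q ^ (n * (n - 1) / 2)) := by
  rw [e_succ, zpow_add₀ ha n 1, zpow_add₀ hq0 (n * (n - 1) / 2) n, zpow_one]
  rw [map_mul, map_mul, map_mul, map_mul]
  ring

lemma term_pred_abs (a q : ℂ) (ha : a ≠ 0) (hq0 : q ≠ 0) (n : ℤ) :
    Complex.abs (a ^ (n - 1) * q ^ ((n - 1) * ((n - 1) - 1) / 2))
      = ((Complex.abs a)⁻¹ * (Complex.abs (q ^ n))⁻¹ * Complex.abs q)
        * Complex.abs (a ^ n * q ^ (n * (n - 1) / 2)) := by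
  rw [e_pred, zpow_sub₀ ha n 1, zpow_sub₀ hq0 (n * (n - 1) / 2) (n - 1),
    zpow_sub₀ hq0 n 1, zpow_one, zpow_one]
  simp only [map_mul, map_div₀]
  have h1 : Complex.abs (q ^ n) ≠ 0 := by
    simp [zpow_ne_zero, hq0]
  have h2 : Complex.abs q ≠ 0 := by simp [hq0]
  have h3 : Complex.abs a ≠ 0 := by simp [ha]
  field_simp

lemma summable_abs_term (a q : ℂ) (ha : a ≠ 0) (hq0 : q ≠ 0) (hq : Complex.abs q < 1) :
    Summable (fun n : ℤ => Complex.abs (a ^ n * q ^ (n * (n - 1) / 2))) := by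
  set g : ℤ → ℝ := fun n => Complex.abs (a ^ n * q ^ (n * (n - 1) / 2)) with hg
  have hgnn : ∀ n, 0 ≤ g n := fun n => Complex.abs.nonneg _
  have habs : ∀ n : ℤ, Complex.abs (q ^ n) = Complex.abs q ^ n := fun n => map_zpow₀ _ _ _
  have hpos : Summable (fun k : ℕ => g k) := by
    apply summable_of_ratio_norm_eventually_le (r := 2⁻¹) (by norm_num)
    have ht : Filter.Tendsto (fun k : ℕ => Complex.abs a * Complex.abs q ^ k)
        Filter.atTop (𝓝 0) := by
      have := (tendsto_pow_atTop_nhds_zero_of_lt_one (Complex.abs.nonneg q) hq).const_mul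
        (Complex.abs a)
      simpa using this
    filter_upwards [ht.eventually_lt_const (by norm_num : (0:ℝ) < 2⁻¹)] with k hk
    have h1 : g ((k + 1 : ℕ) : ℤ) = (Complex.abs a * Complex.abs q ^ k) * g k := by
      rw [show ((k + 1 : ℕ) : ℤ) = (k : ℤ) + 1 from by push_cast; ring]
      rw [hg]
      simp only []
      rw [term_succ_abs a q ha hq0 (k : ℤ), habs, zpow_natCast]
    rw [Real.norm_eq_abs, Real.norm_eq_abs, abs_of_nonneg (hgnn _), abs_of_nonneg (hgnn _), h1]
    exact mul_le_mul_of_nonneg_right hk.le (hgnn _)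
  have hneg : Summable (fun k : ℕ => g (-k)) := by
    apply summable_of_ratio_norm_eventually_le (r := 2⁻¹) (by norm_num)
    have ht : Filter.Tendsto
        (fun k : ℕ => (Complex.abs a)⁻¹ * Complex.abs q * Complex.abs q ^ k)
        Filter.atTop (𝓝 0) := by
      have := (tendsto_pow_atTop_nhds_zero_of_lt_one (Complex.abs.nonneg q) hq).const_mul
        ((Complex.abs a)⁻¹ * Complex.abs q)
      simpa [mul_assoc] using this
    filter_upwards [ht.eventually_lt_const (by norm_num : (0:ℝ) < 2⁻¹)] with k hk
    have h1 : g (-((k + 1 : ℕ) : ℤ)) = ((Complex.abs a)⁻¹ * Complex.abs q * Complex.abs q ^ k) * g (-(k : ℤ)) := by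
      rw [show (-((k + 1 : ℕ) : ℤ)) = (-(k : ℤ)) - 1 from by push_cast; ring]
      rw [hg]
      simp only []
      rw [term_pred_abs a q ha hq0 (-(k : ℤ)), habs, zpow_neg, inv_inv, zpow_natCast]
      ring
    rw [Real.norm_eq_abs, Real.norm_eq_abs, abs_of_nonneg (hgnn _), abs_of_nonneg (hgnn _), h1]
    exact mul_le_mul_of_nonneg_right hk.le (hgnn _)
  exact hpos.of_nat_of_neg hneg

lemma tendsto_gb {q : ℂ} (hq : Complex.abs q < 1) (n : ℤ) :
    Filter.Tendsto (fun N : ℕ => gb q (2 * N) ((N : ℤ) + n)) Filter.atTop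
      (𝓝 (∏' k : ℕ, (1 - q ^ (k + 1)))⁻¹) := by
  set P := ∏' k : ℕ, (1 - q ^ (k + 1)) with hPd
  have hP : P ≠ 0 := tprod_one_sub_ne hq
  have h2N : Filter.Tendsto (fun N : ℕ => qfac q (2 * N)) Filter.atTop (𝓝 P) :=
    (tendsto_qfac hq).comp
      (tendsto_atTop_mono (fun N => by simp only [id_eq]; omega : ∀ N : ℕ, id N ≤ 2 * N) Filter.tendsto_id)
  have hu2 : Filter.Tendsto (fun N : ℕ => ((N : ℤ) + n).toNat) Filter.atTop Filter.atTop :=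
    tendsto_atTop_mono (fun N => by omega) (tendsto_sub_atTop_nat n.natAbs)
  have hu3 : Filter.Tendsto (fun N : ℕ => 2 * N - ((N : ℤ) + n).toNat)
      Filter.atTop Filter.atTop :=
    tendsto_atTop_mono (fun N => by omega) (tendsto_sub_atTop_nat n.natAbs)
  have hF : Filter.Tendsto (fun N : ℕ =>
      qfac q (2 * N) / (qfac q ((N : ℤ) + n).toNat * qfac q (2 * N - ((N : ℤ) + n).toNat)))
      Filter.atTop (𝓝 (P / (P * P))) :=
    h2N.div (((tendsto_qfac hq).comp hu2).mul ((tendsto_qfac hq).comp hu3)) (mul_ne_zero hP hP)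
  have heq : P / (P * P) = P⁻¹ := by field_simp
  rw [heq] at hF
  refine Filter.Tendsto.congr' ?_ hF
  filter_upwards [Filter.eventually_ge_atTop n.natAbs] with N hN
  rw [gb, if_pos (by constructor <;> omega)]

/-- The Jacobi triple product identity for `f(a,b) = ∑_{n∈ℤ} a^{n(n+1)/2} b^{n(n-1)/2}`. -/
theorem jacobi_triple_product (a b : ℂ) (ha : a ≠ 0) (hb : b ≠ 0)
    (hab : ‖a * b‖ < 1) :
    (∑' n : ℤ, a ^ (n * (n + 1) / 2) * b ^ (n * (n - 1) / 2)) =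
      ∏' k : ℕ, (1 + a * (a * b) ^ k) * (1 + b * (a * b) ^ k) * (1 - (a * b) ^ (k + 1)) := by
  have hq0 : a * b ≠ 0 := mul_ne_zero ha hb
  have hP : (∏' k : ℕ, (1 - (a * b) ^ (k + 1))) ≠ 0 := tprod_one_sub_ne hab
  have hL : (∑' n : ℤ, a ^ (n * (n + 1) / 2) * b ^ (n * (n - 1) / 2))
      = ∑' n : ℤ, a ^ n * (a * b) ^ (n * (n - 1) / 2) := by
    apply tsum_congr; intro n
    have h1 : n * (n + 1) / 2 = n * (n - 1) / 2 + n := by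
      rw [show n * (n + 1) = n * (n - 1) + n * 2 from by ring,
        Int.add_mul_ediv_right _ _ (by norm_num : (2 : ℤ) ≠ 0)]
    rw [h1, zpow_add₀ ha, mul_zpow]
    ring
  have hTan : Filter.Tendsto
      (fun N : ℕ => ∑' n : ℤ, gb (a * b) (2 * N) ((N : ℤ) + n)
        * (a ^ n * (a * b) ^ (n * (n - 1) / 2)))
      Filter.atTop
      (𝓝 (∑' n : ℤ, (∏' k : ℕ, (1 - (a * b) ^ (k + 1)))⁻¹
        * (a ^ n * (a * b) ^ (n * (n - 1) / 2)))) := by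
    refine tendsto_tsum_of_dominated_convergence
      (bound := fun n : ℤ => cB (a * b) * Complex.abs (a ^ n * (a * b) ^ (n * (n - 1) / 2)))
      ((summable_abs_term a (a * b) ha hq0 hab).mul_left _)
      (fun n => (tendsto_gb hab n).mul_const _) ?_
    apply Filter.Eventually.of_forall
    intro N n
    rw [Complex.norm_eq_abs, map_mul]
    exact mul_le_mul_of_nonneg_right (abs_gb_le hab _ _) (Complex.abs.nonneg _)
  have hProd : Filter.Tendsto
      (fun N : ℕ => ∏ k ∈ Finset.range N, ((1 + a * (a * b) ^ k) * (1 + b * (a * b) ^ k)))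
      Filter.atTop
      (𝓝 (∑' n : ℤ, (∏' k : ℕ, (1 - (a * b) ^ (k + 1)))⁻¹
        * (a ^ n * (a * b) ^ (n * (n - 1) / 2)))) :=
    Filter.Tendsto.congr (fun N => finite_jtp a b ha hb hab N) hTan
  have hLsum : (∑' n : ℤ, (∏' k : ℕ, (1 - (a * b) ^ (k + 1)))⁻¹
        * (a ^ n * (a * b) ^ (n * (n - 1) / 2)))
      = (∏' k : ℕ, (1 - (a * b) ^ (k + 1)))⁻¹
        * ∑' n : ℤ, a ^ n * (a * b) ^ (n * (n - 1) / 2) := tsum_mul_left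
  by_cases hz : ∀ k : ℕ, (1 + a * (a * b) ^ k) * (1 + b * (a * b) ^ k) ≠ 0
  · have hgeo : ‖a * b‖ < 1 := by simpa [Complex.norm_eq_abs] using hab
    have s1 : Summable (fun k : ℕ => a * (a * b) ^ k) :=
      (summable_geometric_of_norm_lt_one hgeo).mul_left a
    have s2 : Summable (fun k : ℕ => b * (a * b) ^ k) :=
      (summable_geometric_of_norm_lt_one hgeo).mul_left b
    have s3 : Summable (fun k : ℕ => (a * b) ^ (2 * k + 1)) := by
      have h2 : ‖(a * b) ^ 2‖ < 1 := by
        rw [Complex.norm_eq_abs, map_pow]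
        exact pow_lt_one₀ (Complex.abs.nonneg _) hab (by norm_num)
      refine ((summable_geometric_of_norm_lt_one h2).mul_left (a * b)).congr (fun k => ?_)
      rw [← pow_mul, ← pow_succ']
    have hFsum : Summable (fun k : ℕ =>
        -(a * (a * b) ^ k) - b * (a * b) ^ k - (a * b) ^ (2 * k + 1)) :=
      (s1.neg.sub s2).sub s3
    have hDlog : Summable (fun k : ℕ =>
        Complex.log ((1 + a * (a * b) ^ k) * (1 + b * (a * b) ^ k))) := by
      refine hFsum.clog_one_sub.congr (fun k => ?_)
      rw [show (1 : ℂ) - (-(a * (a * b) ^ k) - b * (a * b) ^ k - (a * b) ^ (2 * k + 1))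
        = (1 + a * (a * b) ^ k) * (1 + b * (a * b) ^ k) from by ring]
    have hDmult : Multipliable (fun k : ℕ => (1 + a * (a * b) ^ k) * (1 + b * (a * b) ^ k)) :=
      Complex.multipliable_of_summable_log hDlog
    have hDP : (∏' k : ℕ, ((1 + a * (a * b) ^ k) * (1 + b * (a * b) ^ k)))
        = ∑' n : ℤ, (∏' k : ℕ, (1 - (a * b) ^ (k + 1)))⁻¹
          * (a ^ n * (a * b) ^ (n * (n - 1) / 2)) :=
      tendsto_nhds_unique hDmult.hasProd.tendsto_prod_nat hProd
    have hsplit : (∏' k : ℕ, ((1 + a * (a * b) ^ k) * (1 + b * (a * b) ^ k)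
          * (1 - (a * b) ^ (k + 1))))
        = (∏' k : ℕ, ((1 + a * (a * b) ^ k) * (1 + b * (a * b) ^ k)))
          * ∏' k : ℕ, (1 - (a * b) ^ (k + 1)) := Multipliable.tprod_mul hDmult (mult_one_sub hab)
    rw [hL, hsplit, hDP, hLsum]
    field_simp
  · push_neg at hz
    obtain ⟨k0, hk0⟩ := hz
    have hT0 : HasProd (fun k : ℕ => (1 + a * (a * b) ^ k) * (1 + b * (a * b) ^ k)
        * (1 - (a * b) ^ (k + 1))) 0 :=
      hasProd_zero_of_zero k0 (by rw [hk0, zero_mul])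
    have hL0 : (∑' n : ℤ, (∏' k : ℕ, (1 - (a * b) ^ (k + 1)))⁻¹
        * (a ^ n * (a * b) ^ (n * (n - 1) / 2))) = 0 := by
      apply tendsto_nhds_unique hProd
      refine Filter.Tendsto.congr' ?_ tendsto_const_nhds
      filter_upwards [Filter.eventually_ge_atTop (k0 + 1)] with N hN
      exact (Finset.prod_eq_zero (Finset.mem_range.2 (by omega)) hk0).symm
    rw [hL, hT0.tprod_eq]
    have h2 := hLsum
    rw [hL0] at h2
    exact ((mul_eq_zero.mp h2.symm).resolve_left (inv_ne_zero hP))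
end

section
/- For every integer δ and all n ≥ 1, p_{5δ-3}(5n - 2) ≡ 0 (mod 5), where p_k(n) is defined by ∑_{n≥0} p_k(n) qⁿ = 1/(q;q)_∞^k. -/
open PowerSeries Finset

/-- The Euler product `(q;q)_∞ = ∏_{m≥1} (1 - q^m)` as a formal power series over `ℤ`. -/
noncomputable def eulerProd : PowerSeries ℤ :=
  PowerSeries.mk fun n =>
    PowerSeries.coeff n (∏ k ∈ Finset.range (n + 1), (1 - (X : PowerSeries ℤ) ^ (1 + k)))

/-- The generating function `1/(q;q)_∞^k` of the generalized partition function `p_k`,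
for `k ∈ ℤ` (the inverse is taken via `invOfUnit`, since `(q;q)_∞` has constant term 1). -/
noncomputable def genPartGF (k : ℤ) : PowerSeries ℤ :=
  if 0 ≤ k then (PowerSeries.invOfUnit eulerProd 1) ^ k.toNat
  else eulerProd ^ (-k).toNat

namespace JacAux

variable {R : Type*} [CommRing R]

/-- partial Euler product -/
noncomputable def P (k : ℕ) : PowerSeries R := ∏ i ∈ Finset.range k, (1 - (X : PowerSeries R) ^ (1 + i))

lemma constantCoeff_P (k : ℕ) : constantCoeff (P k : PowerSeries R) = 1 := by
  simp [P, map_prod]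

noncomputable def Pinv (k : ℕ) : PowerSeries R := invOfUnit (P k) 1

lemma P_mul_Pinv (k : ℕ) : (P k : PowerSeries R) * Pinv k = 1 :=
  PowerSeries.mul_invOfUnit _ 1 (by simp [constantCoeff_P])

lemma P_succ (k : ℕ) : (P (k+1) : PowerSeries R) = P k * (1 - X ^ (1+k)) := by
  simp [P, Finset.prod_range_succ]

lemma Pinv_eq (k : ℕ) : (Pinv k : PowerSeries R) = (1 - X ^ (1+k)) * Pinv (k+1) := by
  have h1 : (P k : PowerSeries R) * ((1 - X ^ (1+k)) * Pinv (k+1)) = 1 := by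
    rw [← mul_assoc, ← P_succ, P_mul_Pinv]
  calc (Pinv k : PowerSeries R) = Pinv k * (P k * ((1 - X ^ (1+k)) * Pinv (k+1))) := by rw [h1, mul_one]
    _ = (P k * Pinv k) * ((1 - X ^ (1+k)) * Pinv (k+1)) := by ring
    _ = (1 - X ^ (1+k)) * Pinv (k+1) := by rw [P_mul_Pinv, one_mul]

/-- numerator of the Gaussian binomial -/
noncomputable def N (m k : ℕ) : PowerSeries R := ∏ i ∈ Finset.range k, (1 - (X : PowerSeries R) ^ (m - k + i + 1))

lemma N_zero (m : ℕ) : (N m 0 : PowerSeries R) = 1 := by simp [N]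

lemma N_self (m : ℕ) : (N m m : PowerSeries R) = P m := by
  unfold N P
  refine Finset.prod_congr rfl fun i _ => ?_
  have : m - m + i + 1 = 1 + i := by omega
  rw [this]

lemma N_peel_lo (m k : ℕ) (h1 : 1 ≤ k) (h2 : k ≤ m) :
    (N m k : PowerSeries R) = (1 - X ^ (m - k + 1)) * N m (k-1) := by
  obtain ⟨k', rfl⟩ : ∃ k', k = k' + 1 := ⟨k - 1, by omega⟩
  unfold N
  rw [Finset.prod_range_succ', mul_comm]
  congr 1
  refine Finset.prod_congr rfl fun i _ => ?_
  congr 2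
  omega

lemma N_peel_hi (m k : ℕ) (h1 : 1 ≤ k) (h2 : k ≤ m + 1) :
    (N (m+1) k : PowerSeries R) = (1 - X ^ (m+1)) * N m (k-1) := by
  obtain ⟨k', rfl⟩ : ∃ k', k = k' + 1 := ⟨k - 1, by omega⟩
  unfold N
  rw [Finset.prod_range_succ, mul_comm]
  congr 1
  · congr 2
    omega
  · refine Finset.prod_congr rfl fun i hi => ?_
    congr 2
    simp only [Finset.mem_range] at hi
    omega

/-- Gaussian binomial as a power series, with integer second index. -/
noncomputable def B (m : ℕ) (k : ℤ) : PowerSeries R :=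
  if 0 ≤ k ∧ k ≤ m then N m k.toNat * Pinv k.toNat else 0

lemma B_zero_of_lt (m : ℕ) (k : ℤ) (h : k < 0) : (B m k : PowerSeries R) = 0 := by
  rw [B, if_neg]; omega

lemma B_zero_of_gt (m : ℕ) (k : ℤ) (h : (m:ℤ) < k) : (B m k : PowerSeries R) = 0 := by
  rw [B, if_neg]; omega

lemma B_zero_left (m : ℕ) : (B m 0 : PowerSeries R) = 1 := by
  rw [B, if_pos (by omega)]
  have := P_mul_Pinv (R := R) 0
  simp only [P, Finset.range_zero, Finset.prod_empty, one_mul] at this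
  simpa [N_zero] using this

lemma B_self (m : ℕ) : (B m m : PowerSeries R) = 1 := by
  rw [B, if_pos (by omega)]
  simp only [Int.toNat_natCast, N_self]
  exact P_mul_Pinv m


lemma key_scalar (m j : ℕ) (h1 : 1 ≤ j) (h2 : j ≤ m) :
    (1 - X ^ (m+1) : PowerSeries R) = (1 - X ^ (m - j + 1)) + X ^ (m+1-j) * (1 - X ^ j) := by
  have e1 : m - j + 1 = m + 1 - j := by omega
  have e2 : m + 1 - j + j = m + 1 := by omega
  rw [e1, mul_sub, mul_one, ← pow_add, e2]
  ring

lemma pascal1 (m : ℕ) (k : ℤ) :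
    (B (m+1) k : PowerSeries R) = B m k + X ^ ((m:ℤ)+1-k).toNat * B m (k-1) := by
  rcases lt_or_ge k 0 with h | h
  · rw [B_zero_of_lt _ _ h, B_zero_of_lt _ _ h, B_zero_of_lt _ _ (by omega), mul_zero, add_zero]
  obtain ⟨j, rfl⟩ : ∃ j : ℕ, k = (j : ℤ) := ⟨k.toNat, by omega⟩
  rcases Nat.eq_zero_or_pos j with rfl | hj
  · simp only [Int.natCast_zero, B_zero_left, zero_sub, B_zero_of_lt m (-1) (by omega), mul_zero,
      add_zero]
  rcases lt_or_ge ((m:ℤ)+1) (j:ℤ) with h2 | h2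
  · rw [B_zero_of_gt _ _ (by push_cast; omega), B_zero_of_gt _ _ (by push_cast; omega),
      B_zero_of_gt _ _ (by push_cast; omega), mul_zero, add_zero]
  have hj1 : ((j:ℤ) - 1) = ((j - 1 : ℕ) : ℤ) := by omega
  have htn : ((m:ℤ) + 1 - j).toNat = m + 1 - j := by omega
  rcases eq_or_lt_of_le h2 with h3 | h3
  · have hjm : j = m + 1 := by omega
    subst hjm
    rw [B_zero_of_gt m _ (by push_cast; omega), zero_add, hj1,
      show (m + 1 - 1 : ℕ) = m by omega, htn, show m + 1 - (m+1) = 0 by omega,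
      B_self, B_self, pow_zero, one_mul]
  have hjm : j ≤ m := by omega
  rw [B, if_pos (by constructor <;> omega), B, if_pos (by constructor <;> omega),
    hj1, B, if_pos (by constructor <;> omega), htn]
  simp only [Int.toNat_natCast]
  rw [N_peel_hi m j hj (by omega), N_peel_lo m j hj hjm]
  have hpinv : (Pinv (j-1) : PowerSeries R) = (1 - X ^ j) * Pinv j := by
    have := Pinv_eq (R := R) (j-1)
    rwa [show 1 + (j-1) = j by omega, show j - 1 + 1 = j by omega] at this
  rw [hpinv, key_scalar m j hj hjm]
  ring

lemma pascal2 (m : ℕ) (k : ℤ) :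
    (B (m+1) k : PowerSeries R) = X ^ k.toNat * B m k + B m (k-1) := by
  rcases lt_or_ge k 0 with h | h
  · rw [B_zero_of_lt _ _ h, B_zero_of_lt _ _ h, B_zero_of_lt _ _ (by omega), mul_zero, add_zero]
  obtain ⟨j, rfl⟩ : ∃ j : ℕ, k = (j : ℤ) := ⟨k.toNat, by omega⟩
  rcases Nat.eq_zero_or_pos j with rfl | hj
  · simp only [Int.natCast_zero, B_zero_left, zero_sub, B_zero_of_lt m (-1) (by omega),
      Int.toNat_zero, pow_zero, one_mul, add_zero]
  rcases lt_or_ge ((m:ℤ)+1) (j:ℤ) with h2 | h2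
  · rw [B_zero_of_gt _ _ (by push_cast; omega), B_zero_of_gt _ _ (by push_cast; omega),
      B_zero_of_gt _ _ (by push_cast; omega), mul_zero, zero_add]
  have hj1 : ((j:ℤ) - 1) = ((j - 1 : ℕ) : ℤ) := by omega
  rcases eq_or_lt_of_le h2 with h3 | h3
  · have hjm : j = m + 1 := by omega
    subst hjm
    rw [B_zero_of_gt m _ (by push_cast; omega), mul_zero, zero_add, hj1,
      show (m + 1 - 1 : ℕ) = m by omega, B_self, B_self]
  have hjm : j ≤ m := by omega
  rw [B, if_pos (by constructor <;> omega), B, if_pos (by constructor <;> omega),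
    hj1, B, if_pos (by constructor <;> omega)]
  simp only [Int.toNat_natCast]
  rw [N_peel_hi m j hj (by omega), N_peel_lo m j hj hjm]
  have hpinv : (Pinv (j-1) : PowerSeries R) = (1 - X ^ j) * Pinv j := by
    have := Pinv_eq (R := R) (j-1)
    rwa [show 1 + (j-1) = j by omega, show j - 1 + 1 = j by omega] at this
  rw [hpinv]
  have hs : (1 - X ^ (m+1) : PowerSeries R) = X ^ j * (1 - X ^ (m - j + 1)) + (1 - X ^ j) := by
    have e2 : j + (m - j + 1) = m + 1 := by omega
    rw [mul_sub, mul_one, ← pow_add, e2]; ring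
  rw [hs]
  ring

/-- double Pascal -/
lemma pascal_sq (m : ℕ) (k : ℤ) :
    (B (m+2) k : PowerSeries R)
      = X ^ k.toNat * B m k + (1 + X ^ (m+1)) * B m (k-1)
        + X ^ ((m:ℤ)+2-k).toNat * B m (k-2) := by
  have e1 : (B (m+2) k : PowerSeries R) = B (m+1) k + X ^ ((m:ℤ)+2-k).toNat * B (m+1) (k-1) := by
    have h := pascal1 (R := R) (m+1) k
    rw [show (((m+1:ℕ)):ℤ)+1-k = ((m:ℤ)+2-k) by push_cast; ring] at h
    exact h
  rw [e1, pascal2 m k, pascal2 m (k-1), show k - 1 - 1 = k - 2 by ring]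
  rcases le_or_gt k 0 with h | h
  · rw [B_zero_of_lt m (k-1) (by omega), B_zero_of_lt m (k-2) (by omega)]
    ring
  rcases lt_or_ge ((m:ℤ)+2) k with h2 | h2
  · rw [B_zero_of_gt m (k-1) (by omega), B_zero_of_gt m (k-2) (by omega)]
    ring
  have hkey : X ^ ((m:ℤ)+2-k).toNat * (X ^ (k-1).toNat * (B m (k-1) : PowerSeries R))
      = X ^ (m+1) * B m (k-1) := by
    rcases lt_or_ge ((m:ℤ)+1) k with h4 | h4
    · rw [B_zero_of_gt m (k-1) (by omega), mul_zero, mul_zero, mul_zero]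
    rw [← mul_assoc, ← pow_add, show ((m:ℤ)+2-k).toNat + (k-1).toNat = m + 1 by omega]
  rw [mul_add, hkey]
  ring


/-- triangular-number exponent -/
def T (t : ℤ) : ℕ := (t*(t+1)/2).toNat

lemma T_cast (t : ℤ) : 2 * (T t : ℤ) = t * (t + 1) := by
  have h2 : (2:ℤ) ∣ t*(t+1) := (Int.even_mul_succ_self t).two_dvd
  have hnn : 0 ≤ t * (t+1) := by
    rcases le_or_gt 0 t with h | h
    · exact mul_nonneg h (by omega)
    · have he : t * (t+1) = (-t) * (-(t+1)) := by ring
      rw [he]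
      exact mul_nonneg (by omega) (by omega)
  rw [T, Int.toNat_of_nonneg (Int.ediv_nonneg hnn (by norm_num))]
  omega

lemma T_succ (t : ℤ) : (T (t+1) : ℤ) = T t + t + 1 := by
  have h1 := T_cast t
  have h2 := T_cast (t+1)
  obtain ⟨a, ha⟩ : ∃ a : ℤ, a = t*t := ⟨_, rfl⟩
  have h1' : 2*(T t:ℤ) = a + t := by rw [h1, ha]; ring
  have h2' : 2*(T (t+1):ℤ) = a + 3*t + 2 := by rw [h2, ha]; ring
  omega

lemma T_pred (t : ℤ) : (T (t-1) : ℤ) = T t - t := by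
  have h1 := T_cast t
  have h2 := T_cast (t-1)
  obtain ⟨a, ha⟩ : ∃ a : ℤ, a = t*t := ⟨_, rfl⟩
  have h1' : 2*(T t:ℤ) = a + t := by rw [h1, ha]; ring
  have h2' : 2*(T (t-1):ℤ) = a - t := by rw [h2, ha]; ring
  omega

theorem star (v : Rˣ) (n : ℕ) :
    (∏ i ∈ Finset.range n, (1 - C (v:R) * X ^ (1+i))) *
      (∏ i ∈ Finset.range n, (1 - C (↑v⁻¹:R) * X ^ i))
      = ∑ t ∈ Finset.Icc (-(n:ℤ)) (n:ℤ),
          C (((-v)^t : Rˣ) : R) * X ^ T t * B (2*n) ((n:ℤ) + t) := by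
  induction n with
  | zero =>
      norm_num
      rw [B_zero_left]
      norm_num [show T 0 = 0 from rfl]
  | succ n ih =>
      set c : ℤ → PowerSeries R := fun t => C (((-v)^t : Rˣ) : R) with hc
      have hI' : Finset.Icc (-((n:ℕ)+1:ℤ)) (((n:ℕ):ℤ)+1)
          = Finset.Icc (-((n:ℤ))-1) ((n:ℤ)+1) := by congr 1; ring
      push_cast
      rw [Finset.prod_range_succ, Finset.prod_range_succ]
      have lhs_eq :
          ((∏ i ∈ Finset.range n, (1 - C (v:R) * X ^ (1+i))) * (1 - C (v:R) * X ^ (1+n))) *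
          ((∏ i ∈ Finset.range n, (1 - C (↑v⁻¹:R) * X ^ i)) * (1 - C (↑v⁻¹:R) * X ^ n))
          = ((∏ i ∈ Finset.range n, (1 - C (v:R) * X ^ (1+i))) *
             (∏ i ∈ Finset.range n, (1 - C (↑v⁻¹:R) * X ^ i))) *
            ((1 - C (v:R) * X ^ (1+n)) * (1 - C (↑v⁻¹:R) * X ^ n)) := by ring
      rw [lhs_eq, ih]
      -- rewrite the RHS sum using the double Pascal recurrence
      have hG : ∀ t ∈ Finset.Icc (-(n:ℤ)-1) ((n:ℤ)+1),
          c t * X ^ T t * B (2*(n+1)) ((n:ℤ)+1+t)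
            = c t * X ^ T t * (X ^ (((n:ℤ)+1+t).toNat) * B (2*n) ((n:ℤ)+1+t))
            + c t * X ^ T t * ((1 + X^(2*n+1)) * B (2*n) ((n:ℤ)+t))
            + c t * X ^ T t * (X ^ (((n:ℤ)+1-t).toNat) * B (2*n) ((n:ℤ)+(t-1))) := by
        intro t _
        have h := pascal_sq (R := R) (2*n) ((n:ℤ)+1+t)
        rw [show (2*n+2 : ℕ) = 2*(n+1) by ring,
          show ((n:ℤ)+1+t-1) = (n:ℤ)+t by ring,
          show ((n:ℤ)+1+t-2) = (n:ℤ)+(t-1) by ring,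
          show (((2*n:ℕ)):ℤ)+2-((n:ℤ)+1+t) = (n:ℤ)+1-t by push_cast; ring] at h
        rw [h]
        ring
      calc
        (∑ t ∈ Finset.Icc (-(n:ℤ)) (n:ℤ), c t * X ^ T t * B (2*n) ((n:ℤ) + t)) *
            ((1 - C (v:R) * X ^ (1+n)) * (1 - C (↑v⁻¹:R) * X ^ n))
            = ∑ t ∈ Finset.Icc (-(n:ℤ)) (n:ℤ),
                (c (t-1) * X ^ T (t-1) * (X ^ (((n:ℤ)+t).toNat) * B (2*n) ((n:ℤ)+t))
                + c t * X ^ T t * ((1 + X^(2*n+1)) * B (2*n) ((n:ℤ)+t))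
                + c (t+1) * X ^ T (t+1) * (X ^ (((n:ℤ)-t).toNat) * B (2*n) ((n:ℤ)+t))) := by
          rw [Finset.sum_mul]
          refine Finset.sum_congr rfl fun t ht => ?_
          simp only [Finset.mem_Icc] at ht
          have hv1 : c (t-1) = -(C (↑v⁻¹:R) * c t) := by
            have h1 : ((-v)^(t-1) : Rˣ) = (-v)^t * (-v)⁻¹ := by
              rw [zpow_sub_one]
            have h2 : ((-v)⁻¹ : Rˣ) = -(v⁻¹) := by
              apply inv_eq_of_mul_eq_one_right
              simp
            simp only [hc, h1, h2, Units.val_mul, Units.val_neg, map_mul, map_neg]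
            ring
          have hv2 : c (t+1) = -(C (v:R) * c t) := by
            have h1 : ((-v)^(t+1) : Rˣ) = (-v)^t * (-v) := by
              rw [zpow_add_one]
            simp only [hc, h1, Units.val_mul, Units.val_neg, map_mul, map_neg]
            ring
          have hx1 : (X:PowerSeries R) ^ T (t-1) * X ^ (((n:ℤ)+t).toNat)
              = X ^ T t * X ^ n := by
            rw [← pow_add, ← pow_add]
            congr 1
            have := T_pred t
            omega
          have hx2 : (X:PowerSeries R) ^ T (t+1) * X ^ (((n:ℤ)-t).toNat)
              = X ^ T t * X ^ (1+n) := by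
            rw [← pow_add, ← pow_add]
            congr 1
            have := T_succ t
            omega
          have hu : C (v:R) * C (↑v⁻¹:R) = 1 := by
            rw [← map_mul]
            simp
          have hxx : (X:PowerSeries R)^(1+n) * X^n = X^(2*n+1) := by
            rw [← pow_add]
            congr 1
            omega
          rw [hv1, hv2]
          linear_combination (C (↑v⁻¹:R) * c t * B (2*n) ((n:ℤ)+t)) * hx1
            + (C (v:R) * c t * B (2*n) ((n:ℤ)+t)) * hx2
            + (c t * X ^ T t * B (2*n) ((n:ℤ)+t) * (X^(1+n) * X^n)) * hu
            + (c t * X ^ T t * B (2*n) ((n:ℤ)+t)) * hxx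
        _ = (∑ t ∈ Finset.Icc (-(n:ℤ)) (n:ℤ),
                c (t-1) * X ^ T (t-1) * (X ^ (((n:ℤ)+t).toNat) * B (2*n) ((n:ℤ)+t)))
            + (∑ t ∈ Finset.Icc (-(n:ℤ)) (n:ℤ),
                c t * X ^ T t * ((1 + X^(2*n+1)) * B (2*n) ((n:ℤ)+t)))
            + (∑ t ∈ Finset.Icc (-(n:ℤ)) (n:ℤ),
                c (t+1) * X ^ T (t+1) * (X ^ (((n:ℤ)-t).toNat) * B (2*n) ((n:ℤ)+t))) := by
          rw [← Finset.sum_add_distrib, ← Finset.sum_add_distrib]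
        _ = ∑ t ∈ Finset.Icc (-(n:ℤ)-1) ((n:ℤ)+1),
              c t * X ^ T t * B (2*(n+1)) ((n:ℤ)+1+t) := by
          rw [Finset.sum_congr rfl hG, Finset.sum_add_distrib, Finset.sum_add_distrib]
          congr 1
          · congr 1
            · -- piece 1 : reindex t ↦ t - 1
              have shrink : ∑ t ∈ Finset.Icc (-(n:ℤ)-1) ((n:ℤ)+1),
                  c t * X ^ T t * (X ^ (((n:ℤ)+1+t).toNat) * B (2*n) ((n:ℤ)+1+t))
                  = ∑ t ∈ Finset.Icc (-(n:ℤ)-1) ((n:ℤ)-1),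
                  c t * X ^ T t * (X ^ (((n:ℤ)+1+t).toNat) * B (2*n) ((n:ℤ)+1+t)) := by
                symm
                apply Finset.sum_subset
                · intro x hx
                  simp only [Finset.mem_Icc] at *
                  omega
                · intro x hx hnx
                  simp only [Finset.mem_Icc] at hx hnx
                  rw [B_zero_of_gt (2*n) ((n:ℤ)+1+x) (by push_cast; omega)]
                  ring
              rw [shrink]
              apply Finset.sum_nbij' (fun t => t - 1) (fun t => t + 1)
              · intro a ha
                simp only [Finset.mem_Icc] at *
                omega
              · intro a ha
                simp only [Finset.mem_Icc] at *
                omega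
              · intro a _
                ring
              · intro a _
                ring
              · intro a _
                rw [show (n:ℤ)+1+(a-1) = (n:ℤ)+a by ring]
            · -- piece 2 : same index, extend the range
              apply Finset.sum_subset
              · intro x hx
                simp only [Finset.mem_Icc] at *
                omega
              · intro x hx hnx
                simp only [Finset.mem_Icc] at hx hnx
                rcases lt_or_ge ((n:ℤ)) x with h | h
                · rw [B_zero_of_gt (2*n) ((n:ℤ)+x) (by push_cast; omega)]
                  ring
                · rw [B_zero_of_lt (2*n) ((n:ℤ)+x) (by omega)]
                  ring
          · -- piece 3 : reindex t ↦ t + 1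
            have shrink : ∑ t ∈ Finset.Icc (-(n:ℤ)-1) ((n:ℤ)+1),
                c t * X ^ T t * (X ^ (((n:ℤ)+1-t).toNat) * B (2*n) ((n:ℤ)+(t-1)))
                = ∑ t ∈ Finset.Icc (-(n:ℤ)+1) ((n:ℤ)+1),
                c t * X ^ T t * (X ^ (((n:ℤ)+1-t).toNat) * B (2*n) ((n:ℤ)+(t-1))) := by
              symm
              apply Finset.sum_subset
              · intro x hx
                simp only [Finset.mem_Icc] at *
                omega
              · intro x hx hnx
                simp only [Finset.mem_Icc] at hx hnx
                rw [B_zero_of_lt (2*n) ((n:ℤ)+(x-1)) (by omega)]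
                ring
            rw [shrink]
            apply Finset.sum_nbij' (fun t => t + 1) (fun t => t - 1)
            · intro a ha
              simp only [Finset.mem_Icc] at *
              omega
            · intro a ha
              simp only [Finset.mem_Icc] at *
              omega
            · intro a _
              ring
            · intro a _
              ring
            · intro a _
              rw [show (n:ℤ)+1-(a+1) = (n:ℤ)-a by ring, show a+1-1 = a by ring]
        _ = ∑ x ∈ Finset.Icc (-((n:ℤ)+1)) ((n:ℤ)+1),
              C (((-v)^x : Rˣ) : R) * X ^ T x * B (2*(n+1)) ((n:ℤ)+1+x) := by
          rw [hI']


lemma X_pow_dvd_prod_sub_one {ι : Type*} (m : ℕ) (s : Finset ι) (e : ι → ℕ)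
    (h : ∀ i ∈ s, m < e i) :
    (X:PowerSeries R)^(m+1) ∣ (∏ i ∈ s, (1 - (X:PowerSeries R)^(e i))) - 1 := by
  classical
  induction s using Finset.induction_on with
  | empty => simp
  | @insert a s' hns ih =>
      rw [Finset.prod_insert hns]
      have ha := h a (Finset.mem_insert_self a s')
      have ih' := ih fun i hi => h i (Finset.mem_insert_of_mem hi)
      have hXa : (X:PowerSeries R)^(m+1) ∣ X^(e a) := pow_dvd_pow _ (by omega)
      have key : (1 - (X:PowerSeries R)^(e a)) * (∏ i ∈ s', (1 - X^(e i))) - 1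
          = ((∏ i ∈ s', (1 - X^(e i))) - 1) - X^(e a) * (∏ i ∈ s', (1 - X^(e i))) := by
        ring
      rw [key]
      exact dvd_sub ih' (Dvd.dvd.mul_right hXa _)

lemma P_mul_Pinv_tail (a b : ℕ) (h : b ≤ a) :
    (P a : PowerSeries R) * Pinv b = ∏ i ∈ Finset.range (a - b), (1 - X^(1+(b+i))) := by
  have hP : (P a : PowerSeries R) = P b * ∏ i ∈ Finset.range (a - b), (1 - X^(1+(b+i))) := by
    rw [P, show a = b + (a - b) by omega, Finset.prod_range_add]
    rw [show b + (a-b) - b = a - b by omega]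
    rfl
  calc (P a : PowerSeries R) * Pinv b
      = (P b * Pinv b) * ∏ i ∈ Finset.range (a - b), (1 - X^(1+(b+i))) := by rw [hP]; ring
    _ = ∏ i ∈ Finset.range (a - b), (1 - X^(1+(b+i))) := by rw [P_mul_Pinv, one_mul]


section Dual
open TrivSqZeroExt DualNumber

local notation "Rd" => DualNumber ℤ

lemma hv : ((1:Rd)+ε) * (1-ε) = 1 := by
  have h : ((1:Rd)+ε) * (1-ε) = 1 - ε*ε := by ring
  rw [h, DualNumber.eps_mul_eps, sub_zero]

noncomputable def vd : Rdˣ := Units.mkOfMulEqOne _ _ hv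

lemma vd_val : ((vd : Rdˣ) : Rd) = 1 + ε := rfl
lemma vd_inv_val : ((vd⁻¹ : Rdˣ) : Rd) = 1 - ε := rfl

/-- the sign (-1)^t for t : ℤ -/
def w (t : ℤ) : ℤ := if Even t then 1 else -1

lemma w_succ (t : ℤ) : w (t+1) = -w t := by
  unfold w
  by_cases h : Even t <;> simp [Int.even_add_one, h]

lemma w_pred (t : ℤ) : w (t-1) = -w t := by
  unfold w
  by_cases h : Even t <;> simp [Int.even_sub_one, h]

lemma w_neg_one_sub (t : ℤ) : w (-1-t) = -w t := by
  unfold w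
  have he : Even (-1-t) ↔ ¬ Even t := by
    constructor
    · intro ⟨r, hr⟩ ⟨u, hu⟩
      omega
    · intro h
      rcases Int.even_or_odd t with h2 | ⟨u, hu⟩
      · exact absurd h2 h
      · exact ⟨-1-u, by omega⟩
  by_cases h : Even t
  · rw [if_pos h, if_neg (by rw [he]; exact not_not_intro h)]
  · rw [if_neg h, if_pos (he.mpr h)]
    norm_num

lemma neg_vd_inv : ((-vd)⁻¹ : Rdˣ) = -(vd⁻¹) := by
  apply inv_eq_of_mul_eq_one_right
  rw [neg_mul_neg, mul_inv_cancel]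

lemma c_fst_snd (t : ℤ) :
    ((((-vd)^t : Rdˣ) : Rd)).fst = w t ∧ ((((-vd)^t : Rdˣ) : Rd)).snd = w t * t := by
  induction t using Int.induction_on with
  | zero => simp [w]
  | succ k ih =>
      rw [zpow_add_one, Units.val_mul, fst_mul, DualNumber.snd_mul]
      have h1 : ((-vd : Rdˣ) : Rd) = -(1+ε) := by rw [Units.val_neg, vd_val]
      have hf : ((-vd : Rdˣ) : Rd).fst = -1 := by rw [h1]; simp
      have hs : ((-vd : Rdˣ) : Rd).snd = -1 := by rw [h1]; simp
      rw [hf, hs, ih.1, ih.2, w_succ]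
      constructor <;> push_cast <;> ring
  | pred k ih =>
      rw [show (-(k:ℤ) - 1) = (-(k:ℤ)) - 1 from rfl, zpow_sub_one, Units.val_mul, fst_mul, DualNumber.snd_mul]
      have h1 : (((-vd)⁻¹ : Rdˣ) : Rd) = -(1-ε) := by rw [neg_vd_inv, Units.val_neg, vd_inv_val]
      have hf : (((-vd)⁻¹ : Rdˣ) : Rd).fst = -1 := by rw [h1]; simp
      have hs : (((-vd)⁻¹ : Rdˣ) : Rd).snd = 1 := by rw [h1]; simp
      rw [hf, hs, ih.1, ih.2, w_pred]
      constructor <;> push_cast <;> ring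

lemma prodPair (a : ℕ) :
    (1 - C ((vd:Rd)) * X^a) * (1 - C ((vd⁻¹:Rdˣ):Rd) * X^a) = (1 - X^a)^2 := by
  have h1 : C ((vd:Rd)) * C ((vd⁻¹:Rdˣ):Rd) = 1 := by
    rw [← map_mul, Units.mul_inv, map_one]
  have h2 : C ((vd:Rd)) + C ((vd⁻¹:Rdˣ):Rd) = 2 := by
    rw [← map_add, vd_val, vd_inv_val, show ((1:Rd)+ε) + (1-ε) = 2 by ring, map_ofNat]
  linear_combination ((X:PowerSeries Rd)^a*X^a) * h1 - ((X:PowerSeries Rd)^a) * h2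

lemma eps_absorb (a : ℕ) :
    C (ε : Rd) * (1 - C ((vd:Rd)) * X^a) = C (ε : Rd) * (1 - X^a) := by
  have h : C (ε : Rd) * C ((vd:Rd)) = C (ε : Rd) := by
    rw [← map_mul, vd_val, show ε * ((1:Rd)+ε) = ε + ε*ε by ring, DualNumber.eps_mul_eps, add_zero]
  linear_combination (-(X:PowerSeries Rd)^a) * h

end Dual

section Extract
open TrivSqZeroExt DualNumber

local notation "Rd" => DualNumber ℤ
local notation "ι" => PowerSeries.map (TrivSqZeroExt.inlHom ℤ ℤ)

lemma map_P (k : ℕ) : ι (P k) = (P k : PowerSeries Rd) := by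
  simp [P, map_prod]

lemma map_N (a b : ℕ) : ι (N a b) = (N a b : PowerSeries Rd) := by
  simp [N, map_prod]

theorem jacN (n' : ℕ) (m : ℕ) :
    coeff m ((∏ i ∈ Finset.range n', (1 - (X:PowerSeries ℤ)^(1+i)))^2 *
        ((1 - X^(n'+1)) * P (2*(n'+1))))
      = ∑ t ∈ Finset.Icc (-((n'+1:ℕ):ℤ)) ((n'+1:ℕ):ℤ), (w t * t) *
          coeff m ((X:PowerSeries ℤ)^(T t) * (N (2*(n'+1)) ((((n'+1:ℕ):ℤ)+t).toNat)
            * ∏ i ∈ Finset.range (2*(n'+1) - (((n'+1:ℕ):ℤ)+t).toNat),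
                (1 - (X:PowerSeries ℤ)^(1+(((((n'+1:ℕ):ℤ)+t).toNat)+i))))) := by
  set n : ℕ := n' + 1 with hn
  -- the main dual-number identity
  have main : C (ε : Rd) * ι ((∏ i ∈ Finset.range n', (1 - (X:PowerSeries ℤ)^(1+i)))^2 *
        ((1 - X^n) * P (2*n)))
      = ∑ t ∈ Finset.Icc (-(n:ℤ)) (n:ℤ), C (((-vd)^t : Rdˣ) : Rd) *
          ι ((X:PowerSeries ℤ)^(T t) * (N (2*n) (((n:ℤ)+t).toNat)
            * ∏ i ∈ Finset.range (2*n - (((n:ℤ)+t).toNat)),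
                (1 - (X:PowerSeries ℤ)^(1+((((n:ℤ)+t).toNat)+i))))) := by
    have hstar := star (R := Rd) vd n
    calc C (ε : Rd) * ι ((∏ i ∈ Finset.range n', (1 - (X:PowerSeries ℤ)^(1+i)))^2 *
            ((1 - X^n) * P (2*n)))
        = ((∏ i ∈ Finset.range n, (1 - C ((vd:Rd)) * X ^ (1+i))) *
            (∏ i ∈ Finset.range n, (1 - C ((vd⁻¹:Rdˣ):Rd) * X ^ i))) * P (2*n) := by
          rw [hn, Finset.prod_range_succ, Finset.prod_range_succ']
          have hCe : (1 : PowerSeries Rd) - C ((vd⁻¹:Rdˣ):Rd) * X ^ 0 = C (ε : Rd) := by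
            rw [pow_zero, mul_one, vd_inv_val, show (1 : PowerSeries Rd) = C 1 from
              (map_one _).symm, ← map_sub]
            norm_num
          rw [hCe]
          have hpair : (∏ i ∈ Finset.range n', (1 - C ((vd:Rd)) * X ^ (1+i))) *
              (∏ i ∈ Finset.range n', (1 - C ((vd⁻¹:Rdˣ):Rd) * X ^ (i+1)))
              = (∏ i ∈ Finset.range n', (1 - (X:PowerSeries Rd) ^ (1+i)))^2 := by
            rw [← Finset.prod_mul_distrib, ← Finset.prod_pow]
            refine Finset.prod_congr rfl fun i _ => ?_
            rw [add_comm i 1, prodPair (1+i)]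
          have habs := eps_absorb (1+n')
          have hexp : ι ((∏ i ∈ Finset.range n', (1 - (X:PowerSeries ℤ)^(1+i)))^2 *
              ((1 - X^n) * P (2*n)))
              = (∏ i ∈ Finset.range n', (1 - (X:PowerSeries Rd)^(1+i)))^2 *
              ((1 - X^n) * P (2*n)) := by
            simp [map_prod, map_P]
          rw [hexp]
          have h1n : (1:ℕ) + n' = n := by omega
          calc C (ε : Rd) * ((∏ i ∈ Finset.range n', (1 - (X:PowerSeries Rd)^(1+i)))^2 *
                ((1 - X^n) * P (2*n)))
              = (C (ε : Rd) * (1 - (X:PowerSeries Rd)^(1+n'))) *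
                ((∏ i ∈ Finset.range n', (1 - (X:PowerSeries Rd)^(1+i)))^2 * P (2*n)) := by
                rw [h1n]; ring
            _ = (C (ε : Rd) * (1 - C ((vd:Rd)) * X^(1+n'))) *
                ((∏ i ∈ Finset.range n', (1 - (X:PowerSeries Rd)^(1+i)))^2 * P (2*n)) := by
                rw [habs]
            _ = _ := by
                linear_combination (-(C (ε : Rd) * (1 - C ((vd:Rd)) * X ^ (1 + n')) *
                  (P (2*n) : PowerSeries Rd))) * hpair
      _ = (∑ t ∈ Finset.Icc (-(n:ℤ)) (n:ℤ),
            C (((-vd)^t : Rdˣ) : Rd) * X ^ T t * B (2*n) ((n:ℤ) + t)) * P (2*n) := by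
          rw [hstar]
      _ = _ := by
          rw [Finset.sum_mul]
          refine Finset.sum_congr rfl fun t ht => ?_
          simp only [Finset.mem_Icc] at ht
          have hk : (0:ℤ) ≤ (n:ℤ) + t ∧ (n:ℤ) + t ≤ (2*n : ℕ) := by
            constructor <;> push_cast <;> omega
          rw [B, if_pos hk]
          set k : ℕ := ((n:ℤ)+t).toNat with hkdef
          have hk2 : k ≤ 2*n := by omega
          have htail := P_mul_Pinv_tail (R := Rd) (2*n) k hk2
          rw [map_mul, map_mul, map_pow, PowerSeries.map_X, map_N, map_prod]
          simp only [map_sub, map_one, map_pow, PowerSeries.map_X]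
          calc C (((-vd)^t : Rdˣ) : Rd) * X ^ T t * (N (2*n) k * Pinv k) * P (2*n)
              = C (((-vd)^t : Rdˣ) : Rd) * X ^ T t * (N (2*n) k * (P (2*n) * Pinv k)) := by
                ring
            _ = _ := by
                rw [htail]
                ring
  -- extract coefficients and the ε-part
  have h1 := congrArg (coeff m) main
  rw [map_sum] at h1
  simp only [coeff_C_mul, PowerSeries.coeff_map] at h1
  have h2 := congrArg TrivSqZeroExt.snd h1
  have hsum : ∀ (s : Finset ℤ) (F : ℤ → Rd),
      TrivSqZeroExt.snd (∑ t ∈ s, F t) = ∑ t ∈ s, TrivSqZeroExt.snd (F t) :=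
    fun s F => map_sum (TrivSqZeroExt.sndHom ℤ ℤ) F s
  rw [hsum] at h2
  have hL : TrivSqZeroExt.snd (ε * (TrivSqZeroExt.inlHom ℤ ℤ)
      (coeff m ((∏ i ∈ Finset.range n', (1 - (X:PowerSeries ℤ)^(1+i)))^2 *
        ((1 - X^n) * P (2*n)))))
      = coeff m ((∏ i ∈ Finset.range n', (1 - (X:PowerSeries ℤ)^(1+i)))^2 *
        ((1 - X^n) * P (2*n))) := by
    rw [DualNumber.snd_mul]
    simp
  rw [hL] at h2
  rw [h2]
  refine Finset.sum_congr rfl fun t _ => ?_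
  rw [DualNumber.snd_mul]
  simp only [TrivSqZeroExt.snd_inl, TrivSqZeroExt.fst_inl, mul_zero, zero_mul, add_zero, zero_add,
    (c_fst_snd t).2]
  simp [TrivSqZeroExt.inlHom]

end Extract


lemma coeff_eq_of_sub_dvd {m k : ℕ} {f g : PowerSeries R}
    (h : (X:PowerSeries R)^(m+1) ∣ f - g) (hk : k ≤ m) : coeff k f = coeff k g := by
  have h0 := PowerSeries.X_pow_dvd_iff.mp h k (by omega)
  rwa [map_sub, sub_eq_zero] at h0

lemma dvd_mul_compat {m : ℕ} {f g f' g' : PowerSeries R}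
    (h1 : (X:PowerSeries R)^(m+1) ∣ f - g) (h2 : (X:PowerSeries R)^(m+1) ∣ f' - g') :
    (X:PowerSeries R)^(m+1) ∣ f*f' - g*g' := by
  have he : f*f' - g*g' = f*(f'-g') + (f-g)*g' := by ring
  rw [he]
  exact dvd_add (h2.mul_left f) (h1.mul_right g')

lemma P_split (a b : ℕ) (h : b ≤ a) :
    (P a : PowerSeries R) = P b * ∏ i ∈ Finset.range (a-b), (1 - X^(1+(b+i))) := by
  rw [P, show a = b + (a - b) by omega, Finset.prod_range_add,
    show b + (a-b) - b = a - b by omega]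
  rfl

lemma P_sub_dvd (m a b : ℕ) (hb : m + 1 ≤ b) (hab : b ≤ a) :
    (X:PowerSeries R)^(m+1) ∣ (P a - P b : PowerSeries R) := by
  rw [P_split a b hab]
  have hd := X_pow_dvd_prod_sub_one (R := R) m (Finset.range (a-b)) (fun i => 1+(b+i))
    (fun i _ => by show m < 1+(b+i); omega)
  have he : (P b : PowerSeries R) * (∏ i ∈ Finset.range (a-b), (1 - X^(1+(b+i)))) - P b
      = P b * ((∏ i ∈ Finset.range (a-b), (1 - X^(1+(b+i)))) - 1) := by ring
  rw [he]
  exact hd.mul_left _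

lemma T_neg_one_sub (t : ℤ) : T (-1-t) = T t := by
  have h1 := T_cast t
  have h2 := T_cast (-1-t)
  obtain ⟨a, ha⟩ : ∃ a:ℤ, a = t*t := ⟨_, rfl⟩
  have h1' : 2*(T t:ℤ) = a + t := by rw [h1, ha]; ring
  have h2' : 2*(T (-1-t):ℤ) = a + t := by rw [h2, ha]; ring
  omega

lemma sum_Icc_split (n : ℕ) (F : ℤ → ℤ) :
    ∑ t ∈ Finset.Icc (-(n:ℤ)) (n:ℤ), F t
      = ∑ j ∈ Finset.range (n+1), F j + ∑ j ∈ Finset.range n, F (-1-(j:ℤ)) := by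
  have hunion : Finset.Icc (-(n:ℤ)) (n:ℤ) = Finset.Icc (0:ℤ) (n:ℤ) ∪ Finset.Icc (-(n:ℤ)) (-1) := by
    ext x
    simp only [Finset.mem_Icc, Finset.mem_union]
    omega
  rw [hunion, Finset.sum_union (by
    rw [Finset.disjoint_left]
    intro x hx hx2
    simp only [Finset.mem_Icc] at hx hx2
    omega)]
  congr 1
  · refine Finset.sum_nbij' (i := fun t => t.toNat) (j := fun j => (j:ℤ)) ?_ ?_ ?_ ?_ ?_
    · intro a ha
      beta_reduce
      simp only [Finset.mem_Icc] at ha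
      simp only [Finset.mem_range]
      omega
    · intro a ha
      beta_reduce
      simp only [Finset.mem_range] at ha
      simp only [Finset.mem_Icc]
      omega
    · intro a ha
      beta_reduce
      simp only [Finset.mem_Icc] at ha
      omega
    · intro a _
      beta_reduce
      simp
    · intro a ha
      beta_reduce
      simp only [Finset.mem_Icc] at ha
      congr 1
      omega
  · refine Finset.sum_nbij' (i := fun t => (-1-t).toNat) (j := fun j => -1-(j:ℤ)) ?_ ?_ ?_ ?_ ?_
    · intro a ha
      beta_reduce
      simp only [Finset.mem_Icc] at ha
      simp only [Finset.mem_range]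
      omega
    · intro a ha
      beta_reduce
      simp only [Finset.mem_range] at ha
      simp only [Finset.mem_Icc]
      omega
    · intro a ha
      beta_reduce
      simp only [Finset.mem_Icc] at ha
      omega
    · intro a ha
      beta_reduce
      simp only [Finset.mem_range] at ha
      omega
    · intro a ha
      beta_reduce
      simp only [Finset.mem_Icc] at ha
      congr 1
      omega

lemma coeff_P_euler (k N : ℕ) (h : k < N) : coeff k (P N) = coeff k eulerProd := by
  have h1 : coeff k eulerProd = coeff k (P (k+1)) := by
    rw [eulerProd, coeff_mk]
    rfl
  have h2 : coeff k (P N : PowerSeries ℤ) = coeff k (P (k+1)) :=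
    coeff_eq_of_sub_dvd (P_sub_dvd k N (k+1) le_rfl (by omega)) le_rfl
  rw [h1, h2]

lemma euler_sub_dvd (m N : ℕ) (h : m + 1 ≤ N) :
    (X:PowerSeries ℤ)^(m+1) ∣ (P N : PowerSeries ℤ) - eulerProd := by
  rw [PowerSeries.X_pow_dvd_iff]
  intro k hk
  rw [map_sub, sub_eq_zero]
  exact coeff_P_euler k N (by omega)

theorem jacobi_coeff_mod5 (m : ℕ) (hm : m % 5 = 3) : (5:ℤ) ∣ coeff m (eulerProd^3) := by
  have hjac := jacN (3*m+2) m
  set n : ℕ := 3*m+2+1 with hndef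
  -- identify the left side with coeff m (eulerProd ^ 3)
  have hL : coeff m ((∏ i ∈ Finset.range (3*m+2), (1 - (X:PowerSeries ℤ)^(1+i)))^2 *
      ((1 - X^n) * P (2*n))) = coeff m (eulerProd^3) := by
    apply coeff_eq_of_sub_dvd _ le_rfl
    have hgen : (∏ i ∈ Finset.range (3*m+2), (1 - (X:PowerSeries ℤ)^(1+i))) = P (3*m+2) := rfl
    rw [hgen]
    have c1 : (X:PowerSeries ℤ)^(m+1) ∣ (P (3*m+2) : PowerSeries ℤ) - eulerProd :=
      euler_sub_dvd m (3*m+2) (by omega)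
    have c2 : (X:PowerSeries ℤ)^(m+1) ∣ ((P (3*m+2))^2 : PowerSeries ℤ) - eulerProd^2 := by
      rw [pow_two, pow_two]
      exact dvd_mul_compat c1 c1
    have c3 : (X:PowerSeries ℤ)^(m+1) ∣ ((1 - X^n : PowerSeries ℤ) - 1) := by
      rw [show (1 - X^n : PowerSeries ℤ) - 1 = -(X^n) by ring]
      exact (pow_dvd_pow _ (by omega)).neg_right
    have c4 : (X:PowerSeries ℤ)^(m+1) ∣ (P (2*n) : PowerSeries ℤ) - eulerProd :=
      euler_sub_dvd m (2*n) (by omega)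
    have c6 := dvd_mul_compat c2 (dvd_mul_compat c3 c4)
    have he : (eulerProd^2 * (1 * eulerProd) : PowerSeries ℤ) = eulerProd^3 := by ring
    rwa [he] at c6
  rw [hL] at hjac
  -- evaluate each coefficient on the right side
  have hterm : ∀ t ∈ Finset.Icc (-(n:ℤ)) (n:ℤ),
      (w t * t) * coeff m ((X:PowerSeries ℤ)^(T t) * (N (2*n) (((n:ℤ)+t).toNat)
            * ∏ i ∈ Finset.range (2*n - (((n:ℤ)+t).toNat)),
                (1 - (X:PowerSeries ℤ)^(1+((((n:ℤ)+t).toNat)+i)))))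
      = (w t * t) * (if T t = m then 1 else 0) := by
    intro t ht
    simp only [Finset.mem_Icc] at ht
    congr 1
    rw [PowerSeries.coeff_X_pow_mul']
    rcases le_or_gt (T t) m with hTm | hTm
    · rw [if_pos hTm]
      have hbound : -2*(m:ℤ)-2 ≤ t ∧ t ≤ (m:ℤ)+1 := by
        have h2 := T_cast t
        obtain ⟨a, ha⟩ : ∃ a:ℤ, a = t*t := ⟨_, rfl⟩
        have h3 : 0 ≤ a - 2*t + 1 := by rw [ha]; nlinarith [sq_nonneg (t-1)]
        have h4 : 0 ≤ a + 2*t + 1 := by rw [ha]; nlinarith [sq_nonneg (t+1)]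
        have h2' : 2*(T t:ℤ) = a + t := by rw [h2, ha]; ring
        omega
      set k : ℕ := ((n:ℤ)+t).toNat with hk
      have hk1 : m + 1 ≤ k := by omega
      have hk2 : k ≤ n + m + 1 := by omega
      have hW : (X:PowerSeries ℤ)^(m+1) ∣ (N (2*n) k
          * (∏ i ∈ Finset.range (2*n - k), (1 - (X:PowerSeries ℤ)^(1+(k+i)))) - 1) := by
        have d1 : (X:PowerSeries ℤ)^(m+1) ∣ (N (2*n) k - 1 : PowerSeries ℤ) := by
          unfold N
          exact X_pow_dvd_prod_sub_one m _ _ (fun i hi => by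
            simp only [Finset.mem_range] at hi
            show m < 2*n - k + i + 1
            omega)
        have d2 : (X:PowerSeries ℤ)^(m+1) ∣
            ((∏ i ∈ Finset.range (2*n - k), (1 - (X:PowerSeries ℤ)^(1+(k+i)))) - 1) :=
          X_pow_dvd_prod_sub_one m _ _ (fun i _ => by show m < 1+(k+i); omega)
        have := dvd_mul_compat d1 d2
        rwa [one_mul] at this
      rw [coeff_eq_of_sub_dvd hW (show m - T t ≤ m by omega), coeff_one]
      by_cases hc : T t = m
      · rw [if_pos (by omega), if_pos hc]
      · rw [if_neg (by omega), if_neg hc]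
    · rw [if_neg (by omega), if_neg (by omega)]
  rw [Finset.sum_congr rfl hterm, sum_Icc_split n
    (fun t => (w t * t) * (if T t = m then 1 else 0)), Finset.sum_range_succ] at hjac
  have hFn : (w (n:ℤ) * (n:ℤ)) * (if T (n:ℤ) = m then 1 else 0) = 0 := by
    have hTn : T (n:ℤ) ≠ m := by
      have h1 := T_cast (n:ℤ)
      obtain ⟨a, ha⟩ : ∃ a:ℤ, a = (n:ℤ)*(n:ℤ) := ⟨_, rfl⟩
      have h2 : 0 ≤ a - n := by
        rw [ha]
        nlinarith [sq_nonneg ((n:ℤ)-1)]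
      have h1' : 2*(T (n:ℤ):ℤ) = a + n := by rw [h1, ha]; ring
      omega
    rw [if_neg hTn, mul_zero]
  rw [hFn, add_zero, ← Finset.sum_add_distrib] at hjac
  rw [hjac]
  apply Finset.dvd_sum
  intro j hj
  rw [T_neg_one_sub, w_neg_one_sub]
  by_cases hc : T (j:ℤ) = m
  · rw [if_pos hc]
    have h5 : (5:ℤ) ∣ 2*(j:ℤ)+1 := by
      have h1 := T_cast (j:ℤ)
      rw [hc] at h1
      obtain ⟨q, hq⟩ : ∃ q:ℕ, m = 5*q+3 := ⟨m/5, by omega⟩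
      have hqz : (m:ℤ) = 5*(q:ℤ)+3 := by omega
      have h3 : (j:ℤ)*((j:ℤ)+1) = 10*(q:ℤ)+6 := by rw [← h1, hqz]; ring
      have h2 : ((j:ZMod 5)) * ((j:ZMod 5)+1) = 1 := by
        have h5' := congrArg (fun z : ℤ => (z : ZMod 5)) h3
        push_cast at h5'
        rw [h5', show ((10:ZMod 5)) = 0 from by decide]
        simp only [zero_mul, zero_add]
        decide
      have hZ : ∀ x : ZMod 5, x*(x+1) = 1 → 2*x+1 = 0 := by decide
      have h4 := hZ _ h2
      have h6 : ((2*(j:ℤ)+1 : ℤ) : ZMod 5) = 0 := by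
        push_cast
        exact h4
      exact (ZMod.intCast_zmod_eq_zero_iff_dvd _ 5).mp h6
    have he : (w (j:ℤ) * (j:ℤ)) * 1 + (-w (j:ℤ) * (-1-(j:ℤ))) * 1
        = w (j:ℤ) * (2*(j:ℤ)+1) := by ring
    rw [he]
    exact h5.mul_left _
  · rw [if_neg hc]
    simp

end JacAux

section Assembly
open JacAux

lemma coeff_pow_five_eq_zero (f : PowerSeries (ZMod 5)) (j : ℕ) (h : ¬ (5 ∣ j)) :
    PowerSeries.coeff j (f^5) = 0 := by
  haveI : Fact (Nat.Prime 5) := ⟨by norm_num⟩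
  set t : Polynomial (ZMod 5) := PowerSeries.trunc (j+1) f with ht
  have hdvd : (X:PowerSeries (ZMod 5))^(j+1) ∣ f - ↑t := by
    rw [PowerSeries.X_pow_dvd_iff]
    intro m hm
    rw [map_sub, Polynomial.coeff_coe, ht, PowerSeries.coeff_trunc, if_pos hm, sub_self]
  have h2 : (X:PowerSeries (ZMod 5))^(j+1) ∣ f^5 - (↑t:PowerSeries (ZMod 5))^5 :=
    dvd_trans hdvd (sub_dvd_pow_sub_pow f (↑t) 5)
  have h3 : PowerSeries.coeff j (f^5)
      = PowerSeries.coeff j ((↑t:PowerSeries (ZMod 5))^5) :=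
    coeff_eq_of_sub_dvd h2 le_rfl
  rw [h3, ← Polynomial.coe_pow]
  have h4 : t^5 = Polynomial.expand (ZMod 5) 5 t := by
    have h5 : Polynomial.map (frobenius (ZMod 5) 5) (Polynomial.expand (ZMod 5) 5 t) = t ^ 5 :=
      Polynomial.map_frobenius_expand 5 t
    have h6 : frobenius (ZMod 5) 5 = RingHom.id (ZMod 5) :=
      RingHom.ext fun x => ZMod.pow_card x
    rw [h6, Polynomial.map_id] at h5
    exact h5.symm
  rw [h4, Polynomial.coeff_coe, Polynomial.coeff_expand (by norm_num : 0 < 5), if_neg h]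

lemma constantCoeff_euler : constantCoeff eulerProd = 1 := by
  have h0 : constantCoeff eulerProd = PowerSeries.coeff 0 eulerProd := by
    rw [PowerSeries.coeff_zero_eq_constantCoeff]
  rw [h0, eulerProd, PowerSeries.coeff_mk]
  simp

lemma euler_mul_inv : eulerProd * PowerSeries.invOfUnit eulerProd 1 = 1 :=
  PowerSeries.mul_invOfUnit _ _ (by rw [constantCoeff_euler]; rfl)

noncomputable def phi5 : PowerSeries ℤ →+* PowerSeries (ZMod 5) :=
  PowerSeries.map (Int.castRingHom (ZMod 5))

noncomputable def Eu : (PowerSeries (ZMod 5))ˣ where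
  val := phi5 eulerProd
  inv := phi5 (PowerSeries.invOfUnit eulerProd 1)
  val_inv := by rw [← map_mul, euler_mul_inv, map_one]
  inv_val := by rw [← map_mul, mul_comm (PowerSeries.invOfUnit eulerProd 1), euler_mul_inv, map_one]

lemma map_genPart (k : ℤ) : phi5 (genPartGF k) = ((Eu ^ (-k) : (PowerSeries (ZMod 5))ˣ) :
    PowerSeries (ZMod 5)) := by
  rw [genPartGF]
  split_ifs with h
  · rw [map_pow]
    have h1 : phi5 (PowerSeries.invOfUnit eulerProd 1)
        = ((Eu⁻¹ : (PowerSeries (ZMod 5))ˣ) : PowerSeries (ZMod 5)) := rfl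
    rw [h1, ← Units.val_pow_eq_pow_val, ← zpow_natCast, inv_zpow, ← zpow_neg,
      Int.toNat_of_nonneg h]
  · rw [map_pow]
    have h1 : phi5 eulerProd = ((Eu : (PowerSeries (ZMod 5))ˣ) : PowerSeries (ZMod 5)) := rfl
    rw [h1, ← Units.val_pow_eq_pow_val, ← zpow_natCast, Int.toNat_of_nonneg (by omega)]

end Assembly

/-- For every `δ ∈ ℤ` and `n ≥ 1`, `p_{5δ-3}(5n-2) ≡ 0 (mod 5)`. -/
theorem genPart_congruence_mod_five (δ : ℤ) (n : ℕ) (hn : 1 ≤ n) :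
    (5 : ℤ) ∣ PowerSeries.coeff (5 * n - 2) (genPartGF (5 * δ - 3)) := by
  suffices hz : ((PowerSeries.coeff (5*n-2) (genPartGF (5*δ-3)) : ℤ) : ZMod 5) = 0 by
    have hd := (ZMod.intCast_zmod_eq_zero_iff_dvd _ 5).mp hz
    exact_mod_cast hd
  have h0 : ((PowerSeries.coeff (5*n-2) (genPartGF (5*δ-3)) : ℤ) : ZMod 5)
      = PowerSeries.coeff (5*n-2) (phi5 (genPartGF (5*δ-3))) := by
    rw [phi5, PowerSeries.coeff_map]
    rfl
  rw [h0, map_genPart]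
  have hexp : -(5*δ-3) = 3 + (-δ)*5 := by ring
  rw [hexp, zpow_add, zpow_mul, show ((5:ℤ)) = ((5:ℕ):ℤ) from rfl, zpow_natCast,
    Units.val_mul, Units.val_pow_eq_pow_val]
  rw [PowerSeries.coeff_mul]
  apply Finset.sum_eq_zero
  intro p hp
  rw [Finset.HasAntidiagonal.mem_antidiagonal] at hp
  by_cases h5 : 5 ∣ p.2
  · have hp1 : p.1 % 5 = 3 := by omega
    have hE3 : ((Eu ^ (3:ℤ) : (PowerSeries (ZMod 5))ˣ) : PowerSeries (ZMod 5))
        = phi5 (eulerProd ^ 3) := by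
      rw [show ((3:ℤ)) = ((3:ℕ):ℤ) from rfl, zpow_natCast, Units.val_pow_eq_pow_val, map_pow]
      rfl
    have hz : PowerSeries.coeff p.1
        ((Eu ^ (3:ℤ) : (PowerSeries (ZMod 5))ˣ) : PowerSeries (ZMod 5)) = 0 := by
      rw [hE3, phi5, PowerSeries.coeff_map]
      exact (ZMod.intCast_zmod_eq_zero_iff_dvd _ 5).mpr (JacAux.jacobi_coeff_mod5 p.1 hp1)
    rw [hz, zero_mul]
  · have hz := coeff_pow_five_eq_zero ((Eu ^ (-δ) : (PowerSeries (ZMod 5))ˣ) :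
      PowerSeries (ZMod 5)) p.2 h5
    rw [hz, mul_zero]
end
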